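/- arXiv:1407.7253 — 2 statements merged into one kernel-verified Lean document; each statement's English description precedes it below -/
import Mathlib

section
/- Let f ∈ PL⁺(S¹) with rotation number 0 that is reversed by some h ∈ PL⁻(S¹) (i.e. hfh⁻¹ = f⁻¹). Then f is strongly reversible in PL(S¹) by an orientation-reversing involution. -/
open Set Real Filter

/-- A function `ℝ → ℝ` is piecewise linear: its set of break points is locally
finite, and off the break points the function is locally affine. -/
def IsPLFun (f : ℝ → ℝ) : Prop :=
  ∃ B : Set ℝ, (∀ r : ℝ, (B ∩ Set.Icc (-r) r).Finite) ∧
    ∀ x ∉ B, ∃ a b : ℝ, ∀ᶠ y in nhds x, f y = a * y + b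

/-- `F : ℝ → ℝ` is a lift of the circle map `f` with degree `k`. -/
def IsLift (f : Circle → Circle) (F : ℝ → ℝ) (k : ℝ) : Prop :=
  (∀ x : ℝ, f (Circle.exp (2 * π * x)) = Circle.exp (2 * π * F x)) ∧
    ∀ x : ℝ, F (x + 1) = F x + k

/-- orientation-preserving piecewise linear homeomorphism of the circle -/
def PLplus (f : Circle ≃ₜ Circle) : Prop :=
  ∃ F : ℝ → ℝ, StrictMono F ∧ IsPLFun F ∧ IsLift f F 1

/-- orientation-reversing piecewise linear homeomorphism of the circle -/
def PLminus (f : Circle ≃ₜ Circle) : Prop :=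
  ∃ F : ℝ → ℝ, StrictAnti F ∧ IsPLFun F ∧ IsLift f F (-1)

/-- piecewise linear homeomorphism of the circle -/
def PLcirc (f : Circle ≃ₜ Circle) : Prop := PLplus f ∨ PLminus f

namespace RevAux



lemma two_pi_ne : (2 * π : ℝ) ≠ 0 := by positivity

lemma exp2_eq_iff {a b : ℝ} :
    Circle.exp (2*π*a) = Circle.exp (2*π*b) ↔ ∃ n : ℤ, a = b + n := by
  rw [Circle.exp_eq_exp]
  constructor
  · rintro ⟨m, hm⟩
    refine ⟨m, ?_⟩
    have h2 : 2*π*a = 2*π*(b + (m:ℝ)) := by rw [hm]; ring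
    exact mul_left_cancel₀ two_pi_ne h2
  · rintro ⟨n, hn⟩
    exact ⟨n, by rw [hn]; ring⟩

lemma exp2_surj (z : Circle) : ∃ x : ℝ, Circle.exp (2*π*x) = z :=
  ⟨Complex.arg z / (2*π), by rw [mul_div_cancel₀ _ two_pi_ne]; exact Circle.exp_arg z⟩

/-- two affine maps agreeing at two distinct points are equal -/
lemma affine_eq_of_two {a b a' b' t₁ t₂ : ℝ} (ht : t₁ ≠ t₂)
    (h1 : a * t₁ + b = a' * t₁ + b') (h2 : a * t₂ + b = a' * t₂ + b') :
    a = a' ∧ b = b' := by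
  have ha : a = a' := by
    by_contra hne
    have : (a - a') * t₁ = (a - a') * t₂ := by linarith
    exact ht (mul_left_cancel₀ (sub_ne_zero.mpr hne) this)
  exact ⟨ha, by rw [ha] at h1; linarith⟩

lemma eventually_two_points {P : ℝ → Prop} {x : ℝ} (h : ∀ᶠ y in nhds x, P y) :
    ∃ t₁ t₂, t₁ ≠ t₂ ∧ P t₁ ∧ P t₂ := by
  rcases Metric.eventually_nhds_iff.mp h with ⟨ε, hε, hball⟩
  refine ⟨x, x + ε/2, by intro hh; nlinarith, hball (by simp [Real.dist_eq, abs_of_nonneg, hε.le]; linarith), hball ?_⟩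
  simp [Real.dist_eq]
  rw [abs_of_nonneg (by linarith)]
  linarith

/-- a germ of affine maps is unique -/
lemma affine_germ_unique {a b a' b' x : ℝ}
    (h : ∀ᶠ y in nhds x, a * y + b = a' * y + b') : a = a' ∧ b = b' := by
  obtain ⟨t₁, t₂, hne, h1, h2⟩ := eventually_two_points h
  exact affine_eq_of_two hne h1 h2

/-- locally affine on an open interval implies affine -/
lemma loc_affine_interval {f : ℝ → ℝ} {l r : ℝ} (hlr : l < r)
    (h : ∀ x ∈ Ioo l r, ∃ a b : ℝ, ∀ᶠ y in nhds x, f y = a * y + b) :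
    ∃ a b : ℝ, ∀ x ∈ Ioo l r, f x = a * x + b := by
  haveI : PreconnectedSpace (Ioo l r) := Subtype.preconnectedSpace isPreconnected_Ioo
  -- germ function
  have hgerm : ∀ x : Ioo l r, ∃ p : ℝ × ℝ, ∀ᶠ y in nhds x.1, f y = p.1 * y + p.2 := by
    rintro ⟨x, hx⟩; rcases h x hx with ⟨a, b, hab⟩; exact ⟨(a, b), hab⟩
  choose Λ hΛ using hgerm
  have hlc : IsLocallyConstant Λ := by
    rw [IsLocallyConstant.iff_exists_open]
    rintro ⟨x, hx⟩
    rcases Metric.eventually_nhds_iff.mp (hΛ ⟨x, hx⟩) with ⟨ε, hε, hball⟩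
    refine ⟨Subtype.val ⁻¹' Metric.ball x ε, (Metric.isOpen_ball).preimage continuous_subtype_val,
      by simpa [Metric.mem_ball] using hε, ?_⟩
    rintro ⟨y, hy⟩ hyball
    -- germ at y equals germ at x by uniqueness
    have h1 : ∀ᶠ z in nhds y, f z = (Λ ⟨x,hx⟩).1 * z + (Λ ⟨x,hx⟩).2 := by
      have : Metric.ball x ε ∈ nhds y := Metric.isOpen_ball.mem_nhds (by simpa using hyball)
      filter_upwards [this] with z hz using hball hz
    have h2 := hΛ ⟨y, hy⟩
    have hev : ∀ᶠ z in nhds y, (Λ ⟨y,hy⟩).1 * z + (Λ ⟨y,hy⟩).2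
        = (Λ ⟨x,hx⟩).1 * z + (Λ ⟨x,hx⟩).2 := by
      filter_upwards [h1, h2] with z hz1 hz2; rw [← hz2, hz1]
    have := affine_germ_unique hev
    exact Prod.ext this.1 this.2
  set m := (l + r)/2 with hm
  have hmem : m ∈ Ioo l r := ⟨by simp [hm]; linarith, by simp [hm]; linarith⟩
  refine ⟨(Λ ⟨m, hmem⟩).1, (Λ ⟨m, hmem⟩).2, ?_⟩
  intro x hx
  have := hlc.apply_eq_of_preconnectedSpace (⟨x, hx⟩ : Ioo l r) ⟨m, hmem⟩
  have hg := hΛ ⟨x, hx⟩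
  rw [this] at hg
  exact hg.self_of_nhds





lemma gapL {B : Set ℝ} (hB : ∀ r : ℝ, (B ∩ Icc (-r) r).Finite) (w : ℝ) :
    ∃ ε > 0, ∀ y ∈ Ioo (w - ε) w, y ∉ B := by
  have hTfin : (B ∩ Ioo (w-1) w).Finite := by
    apply (hB (max (|w-1|) (|w|))).subset
    rintro y ⟨hyB, hy1, hy2⟩
    refine ⟨hyB, ?_, ?_⟩
    · have : -(max (|w-1|) (|w|)) ≤ -(|w-1|) := neg_le_neg (le_max_left _ _)
      calc -(max (|w-1|) (|w|)) ≤ -(|w-1|) := this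
        _ ≤ w - 1 := neg_abs_le _
        _ ≤ y := hy1.le
    · calc y ≤ w := hy2.le
        _ ≤ |w| := le_abs_self _
        _ ≤ _ := le_max_right _ _
  rcases (B ∩ Ioo (w-1) w).eq_empty_or_nonempty with hemp | hne
  · refine ⟨1, one_pos, fun y hy hyB => ?_⟩
    have : y ∈ B ∩ Ioo (w-1) w := ⟨hyB, hy.1, hy.2⟩
    rw [hemp] at this; exact this
  · have hne' : hTfin.toFinset.Nonempty := by
      rwa [Set.Finite.toFinset_nonempty]
    set m := hTfin.toFinset.max' hne' with hm
    have hmT : m ∈ B ∩ Ioo (w-1) w := by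
      have := hTfin.toFinset.max'_mem hne'
      rwa [Set.Finite.mem_toFinset] at this
    refine ⟨w - m, by linarith [hmT.2.2], fun y hy hyB => ?_⟩
    have hym : m < y := by have := hy.1; linarith
    have : y ∈ B ∩ Ioo (w-1) w := ⟨hyB, by linarith [hmT.2.1], hy.2⟩
    have : y ≤ m := hTfin.toFinset.le_max' y (by rwa [Set.Finite.mem_toFinset])
    linarith

lemma gapR {B : Set ℝ} (hB : ∀ r : ℝ, (B ∩ Icc (-r) r).Finite) (w : ℝ) :
    ∃ ε > 0, ∀ y ∈ Ioo w (w + ε), y ∉ B := by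
  have hB' : ∀ r : ℝ, ((fun x => -x) '' B ∩ Icc (-r) r).Finite := by
    intro r
    have : ((fun x : ℝ => -x) '' B ∩ Icc (-r) r) ⊆ (fun x : ℝ => -x) '' (B ∩ Icc (-r) r) := by
      rintro y ⟨⟨x, hx, rfl⟩, h1, h2⟩
      dsimp at h1 h2
      exact ⟨x, ⟨hx, by constructor <;> linarith⟩, rfl⟩
    exact (((hB r).image _)).subset this
  obtain ⟨ε, hε, hgap⟩ := gapL hB' (-w)
  refine ⟨ε, hε, fun y hy hyB => ?_⟩
  exact hgap (-y) ⟨by linarith [hy.2], by linarith [hy.1]⟩ ⟨y, hyB, rfl⟩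

lemma exp2_eq_iff' {a b : ℝ} :
    Circle.exp (2*π*a) = Circle.exp (2*π*b) ↔ ∃ n : ℤ, a = b + n := by
  rw [Circle.exp_eq_exp]
  constructor
  · rintro ⟨m, hm⟩
    refine ⟨m, ?_⟩
    have h2 : 2*π*a = 2*π*(b + (m:ℝ)) := by rw [hm]; ring
    exact mul_left_cancel₀ (by positivity : (2*π:ℝ) ≠ 0) h2
  · rintro ⟨n, hn⟩
    exact ⟨n, by rw [hn]; ring⟩

lemma exp2_surj' (z : Circle) : ∃ x : ℝ, Circle.exp (2*π*x) = z :=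
  ⟨Complex.arg z / (2*π), by
    rw [mul_div_cancel₀ _ (by positivity : (2*π:ℝ) ≠ 0)]; exact Circle.exp_arg z⟩

lemma lift_surj (g : Circle ≃ₜ Circle) (L : ℝ → ℝ)
    (hlift : ∀ x, g (Circle.exp (2*π*x)) = Circle.exp (2*π*(L x)))
    (hshift : ∀ (x : ℝ) (n : ℤ), ∃ x', L x' = L x + n) : Function.Surjective L := by
  intro c
  obtain ⟨w, hw⟩ := g.surjective (Circle.exp (2*π*c))
  obtain ⟨y, hy⟩ := exp2_surj' w
  rw [← hy, hlift] at hw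
  obtain ⟨n, hn⟩ := exp2_eq_iff'.mp hw
  obtain ⟨x', hx'⟩ := hshift y (-n)
  exact ⟨x', by rw [hx', hn]; push_cast; ring⟩

lemma cont_of_mono_surj {L : ℝ → ℝ} (h1 : StrictMono L) (h2 : Function.Surjective L) :
    Continuous L := (StrictMono.orderIsoOfSurjective L h1 h2).continuous

lemma cont_of_anti_surj {L : ℝ → ℝ} (h1 : StrictAnti L) (h2 : Function.Surjective L) :
    Continuous L := by
  have hm : StrictMono (fun x => -(L x)) := fun a b hab => neg_lt_neg (h1 hab)
  have hs : Function.Surjective (fun x => -(L x)) := by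
    intro c; obtain ⟨x, hx⟩ := h2 (-c); exact ⟨x, by simp [hx]⟩
  have := cont_of_mono_surj hm hs
  have : Continuous (fun x => -(-(L x))) := this.neg
  simpa using this

lemma anti_germ_slope_neg {H : ℝ → ℝ} {a b x : ℝ} (hH : StrictAnti H)
    (h : ∀ᶠ y in nhds x, H y = a*y+b) : a < 0 := by
  obtain ⟨ε, hε, hball⟩ := Metric.eventually_nhds_iff.mp h
  have h1 : H x = a*x+b := hball (by simp [hε])
  have h2 : H (x+ε/2) = a*(x+ε/2)+b := hball (by
    rw [Real.dist_eq]; rw [abs_of_nonneg (by linarith)]; linarith)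
  have := hH (show x < x + ε/2 by linarith)
  rw [h1, h2] at this; nlinarith

lemma germ_comp {H K : ℝ → ℝ} {x a b a' b' : ℝ} (hHc : Continuous H)
    (h1 : ∀ᶠ y in nhds x, H y = a*y+b) (h2 : ∀ᶠ z in nhds (H x), K z = a'*z+b') :
    ∀ᶠ y in nhds x, K (H y) = (a'*a)*y + (a'*b+b') := by
  have h3 : ∀ᶠ y in nhds x, K (H y) = a'*(H y)+b' := (hHc.tendsto x).eventually h2
  filter_upwards [h1, h3] with y e1 e2
  rw [e2, e1]; ring

lemma hinv_affine {H Hinv : ℝ → ℝ} (hH : StrictAnti H)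
    (hinv : ∀ y, H (Hinv y) = y) (hinv2 : ∀ x, Hinv (H x) = x)
    {y : ℝ} (hgerm : ∃ a b : ℝ, ∀ᶠ z in nhds (Hinv y), H z = a*z+b) :
    ∃ a b : ℝ, ∀ᶠ z in nhds y, Hinv z = a*z+b := by
  obtain ⟨a, b, hab⟩ := hgerm
  set x := Hinv y with hx
  have ha : a < 0 := anti_germ_slope_neg hH hab
  obtain ⟨ε, hε, hball⟩ := Metric.eventually_nhds_iff.mp hab
  have hyx : y = a*x+b := by
    rw [← hinv y, ← hx]; exact hball (by simp [hε])
  refine ⟨1/a, -b/a, ?_⟩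
  have hmem : Ioo (a*(x+ε/2)+b) (a*(x-ε/2)+b) ∈ nhds y := by
    apply Ioo_mem_nhds <;> rw [hyx] <;> nlinarith
  filter_upwards [hmem] with z hz
  have hw1 : x - ε/2 < (z-b)/a := by
    rw [lt_div_iff_of_neg ha]; nlinarith [hz.2]
  have hw2 : (z-b)/a < x + ε/2 := by
    rw [div_lt_iff_of_neg ha]; nlinarith [hz.1]
  have hzH : H ((z-b)/a) = z := by
    rw [hball (show dist ((z-b)/a) x < ε by
      rw [Real.dist_eq, abs_lt]; constructor <;> linarith)]
    field_simp [ha.ne]; ring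
  have := congrArg Hinv hzH
  rw [hinv2] at this
  rw [this.symm]; field_simp; ring

lemma locfin_union {B C : Set ℝ} (hB : ∀ r : ℝ, (B ∩ Icc (-r) r).Finite)
    (hC : ∀ r : ℝ, (C ∩ Icc (-r) r).Finite) :
    ∀ r : ℝ, ((B ∪ C) ∩ Icc (-r) r).Finite := by
  intro r
  rw [Set.union_inter_distrib_right]
  exact (hB r).union (hC r)

lemma locfin_image {B : Set ℝ} {H Hinv : ℝ → ℝ} (hH : StrictAnti H)
    (hinv : ∀ y, H (Hinv y) = y)
    (hB : ∀ r : ℝ, (B ∩ Icc (-r) r).Finite) :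
    ∀ r : ℝ, ((H '' B) ∩ Icc (-r) r).Finite := by
  intro r
  set r' := max (|Hinv (-r)|) (|Hinv r|) with hr'
  have hsub : (H '' B) ∩ Icc (-r) r ⊆ H '' (B ∩ Icc (-r') r') := by
    rintro y ⟨⟨x, hxB, rfl⟩, h1, h2⟩
    refine ⟨x, ⟨hxB, ?_, ?_⟩, rfl⟩
    · have : Hinv r ≤ x := by
        have hrw : H x ≤ H (Hinv r) := by rw [hinv]; exact h2
        exact (hH.le_iff_ge).mp hrw
      calc -r' ≤ -(|Hinv r|) := neg_le_neg (le_max_right _ _)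
        _ ≤ Hinv r := neg_abs_le _
        _ ≤ x := this
    · have : x ≤ Hinv (-r) := by
        have hrw : H (Hinv (-r)) ≤ H x := by rw [hinv]; exact h1
        exact (hH.le_iff_ge).mp hrw
      calc x ≤ Hinv (-r) := this
        _ ≤ |Hinv (-r)| := le_abs_self _
        _ ≤ r' := le_max_left (|Hinv (-r)|) (|Hinv r|)
  exact ((hB r').image H).subset hsub

lemma locfin_preimage {B : Set ℝ} {H Hinv : ℝ → ℝ} (hH : StrictAnti H)
    (hinv : ∀ y, H (Hinv y) = y) (hinv2 : ∀ x, Hinv (H x) = x)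
    (hB : ∀ r : ℝ, (B ∩ Icc (-r) r).Finite) :
    ∀ r : ℝ, ((H ⁻¹' B) ∩ Icc (-r) r).Finite := by
  intro r
  set r2 := max (|H r|) (|H (-r)|) with hr2
  have hsub : (H ⁻¹' B) ∩ Icc (-r) r ⊆ Hinv '' (B ∩ Icc (-r2) r2) := by
    rintro x ⟨hxB, h1, h2⟩
    refine ⟨H x, ⟨hxB, ?_, ?_⟩, hinv2 x⟩
    · calc -r2 ≤ -(|H r|) := neg_le_neg (le_max_left _ _)
        _ ≤ H r := neg_abs_le _
        _ ≤ H x := hH.antitone h2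
    · calc H x ≤ H (-r) := hH.antitone h1
        _ ≤ |H (-r)| := le_abs_self _
        _ ≤ r2 := le_max_right _ _
  exact (((hB r2).image Hinv)).subset hsub

lemma lattice_fin (P : ℝ) : ∀ r : ℝ, ({y : ℝ | ∃ n : ℤ, y = P + n} ∩ Icc (-r) r).Finite := by
  intro r
  have hsub : {y : ℝ | ∃ n : ℤ, y = P + n} ∩ Icc (-r) r ⊆
      (fun n : ℤ => P + n) '' (↑(Finset.Icc ⌈-r - P⌉ ⌊r - P⌋)) := by
    rintro y ⟨⟨n, rfl⟩, h1, h2⟩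
    refine ⟨n, ?_, rfl⟩
    simp only [Finset.coe_Icc, Set.mem_Icc]
    constructor
    · exact Int.ceil_le.mpr (by linarith)
    · exact Int.le_floor.mpr (by linarith)
  exact (((Finset.Icc _ _).finite_toSet).image _).subset hsub





lemma comm_iter {F G : ℝ → ℝ} (hcomm : ∀ y, G (F y) = F (G y)) :
    ∀ (n : ℕ) (y : ℝ), G (F^[n] y) = F^[n] (G y) := by
  intro n
  induction n with
  | zero => intro y; simp
  | succ n ih =>
    intro y
    rw [Function.iterate_succ_apply', Function.iterate_succ_apply', hcomm, ih]

lemma key_inc (F G : ℝ → ℝ) (hFm : StrictMono F) (hFc : Continuous F)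
    (hcomm : ∀ y, G (F y) = F (G y))
    (hfix_hi : ∀ y : ℝ, ∃ s, F s = s ∧ y ≤ s)
    (haffL : ∀ w : ℝ, ∃ ε > 0, ∃ a b : ℝ, ∀ y ∈ Ioo (w-ε) w, G y = a*y+b)
    {x c : ℝ} (hx : x < F x) (hc : G c = c) (hcx : x ≤ c) (hcF : c ≤ F x) :
    G x = x := by
  set S := {s : ℝ | F s = s} with hS
  have hSc : IsClosed S := isClosed_eq hFc continuous_id
  obtain ⟨s₀, hs₀, hxs₀⟩ := hfix_hi x
  have hSne : (S ∩ Ici x).Nonempty := ⟨s₀, hs₀, hxs₀⟩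
  have hbdd : BddBelow (S ∩ Ici x) := ⟨x, fun s hs => hs.2⟩
  set v := sInf (S ∩ Ici x) with hv
  have hvmem : v ∈ S ∩ Ici x := (hSc.inter isClosed_Ici).csInf_mem hSne hbdd
  have hvS : F v = v := hvmem.1
  have hxv : x < v := by
    rcases eq_or_lt_of_le (Set.mem_Ici.mp hvmem.2 : x ≤ v) with h | h
    · exfalso; rw [← h] at hvS; exact absurd hvS (ne_of_gt hx)
    · exact h
  have hvle : ∀ s, F s = s → x ≤ s → v ≤ s := fun s h1 h2 => csInf_le hbdd ⟨h1, h2⟩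
  have hFxv : F x < v := by
    calc F x < F v := hFm hxv
      _ = v := hvS
  have hcv : c < v := lt_of_le_of_lt hcF hFxv
  have hcfix : F c ≠ c := fun h => absurd (hvle c h hcx) (by linarith)
  have hcinc : c < F c := by
    by_contra hle
    push_neg at hle
    have hlt : F c < c := lt_of_le_of_ne hle hcfix
    have hxc : x < c := by
      rcases eq_or_lt_of_le hcx with rfl | h
      · exact absurd hlt (by linarith)
      · exact h
    have hφ : ContinuousOn (fun t => F t - t) (Icc x c) :=
      (hFc.sub continuous_id).continuousOn
    have h0 : (0:ℝ) ∈ Set.Icc (F c - c) (F x - x) := ⟨by linarith, by linarith⟩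
    obtain ⟨s, hsmem, hs⟩ := intermediate_value_Icc' hxc.le hφ h0
    have hsS : F s = s := by dsimp at hs; linarith
    have := hvle s hsS hsmem.1
    linarith [hsmem.2]
  obtain ⟨ε, hε, a, b, haff⟩ := haffL v
  -- generic orbit lemma
  have horbit : ∀ t, x ≤ t → t < F t → t < v →
      ∃ N : ℕ, F^[N] t ∈ Ioo (v-ε) v ∧ F^[N+1] t ∈ Ioo (v-ε) v ∧ F^[N] t < F^[N+1] t := by
    intro t hxt htF htv
    set o : ℕ → ℝ := fun n => F^[n] t with ho
    have hostep : ∀ n, o (n+1) = F (o n) := fun n => Function.iterate_succ_apply' F n t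
    have hkey : ∀ n, o n < o (n+1) ∧ o n < v ∧ x ≤ o n := by
      intro n
      induction n with
      | zero =>
        refine ⟨?_, htv, hxt⟩
        have h0 : o 0 = t := rfl
        rw [h0, hostep 0, h0]; exact htF
      | succ n ih =>
        refine ⟨?_, ?_, le_trans ih.2.2 ih.1.le⟩
        · have ih1 := ih.1
          rw [hostep n] at ih1
          rw [hostep (n+1), hostep n]
          exact hFm ih1
        · rw [hostep n]
          calc F (o n) < F v := hFm ih.2.1
            _ = v := hvS
    have hmono : StrictMono o := strictMono_nat_of_lt_succ (fun n => (hkey n).1)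
    have hbdd2 : BddAbove (Set.range o) := ⟨v, by rintro _ ⟨n, rfl⟩; exact (hkey n).2.1.le⟩
    have hlim : Tendsto o atTop (nhds (⨆ n, o n)) :=
      tendsto_atTop_ciSup hmono.monotone hbdd2
    set L := ⨆ n, o n with hL
    have hLv : L ≤ v := ciSup_le fun n => (hkey n).2.1.le
    have hLfix : F L = L := by
      have h1 : Tendsto (fun n => o (n+1)) atTop (nhds L) :=
        hlim.comp (tendsto_add_atTop_nat 1)
      have h2 : Tendsto (fun n => F (o n)) atTop (nhds (F L)) := (hFc.tendsto L).comp hlim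
      have heq : (fun n => F (o n)) = fun n => o (n+1) := funext fun n => (hostep n).symm
      rw [heq] at h2
      exact tendsto_nhds_unique h2 h1
    have hxL : x ≤ L := le_trans hxt (le_ciSup hbdd2 0)
    have hLeq : L = v := le_antisymm hLv (hvle L hLfix hxL)
    have hev : ∀ᶠ n in atTop, o n > v - ε := by
      have hlim' := hlim
      rw [hLeq] at hlim'
      exact hlim' (Ioi_mem_nhds (by linarith))
    obtain ⟨N, hN⟩ := eventually_atTop.mp hev
    exact ⟨N, ⟨hN N le_rfl, (hkey N).2.1⟩, ⟨hN (N+1) (by omega), (hkey (N+1)).2.1⟩, (hkey N).1⟩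
  obtain ⟨N, hN1, hN2, hNlt⟩ := horbit c hcx hcinc hcv
  have hGo : ∀ n, G (F^[n] c) = F^[n] c := by
    intro n
    induction n with
    | zero => exact hc
    | succ n ih => rw [Function.iterate_succ_apply', hcomm, ih]
  have e1 : a * (F^[N] c) + b = 1 * (F^[N] c) + 0 := by
    rw [← haff _ hN1, hGo N]; ring
  have e2 : a * (F^[N+1] c) + b = 1 * (F^[N+1] c) + 0 := by
    rw [← haff _ hN2, hGo (N+1)]; ring
  obtain ⟨ha1, hb0⟩ := affine_eq_of_two (ne_of_lt hNlt) e1 e2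
  have hGid : ∀ y ∈ Ioo (v-ε) v, G y = y := fun y hy => by
    rw [haff y hy, ha1, hb0]; ring
  obtain ⟨M, hM1, -, -⟩ := horbit x le_rfl hx hxv
  have hfixM : G (F^[M] x) = F^[M] x := hGid _ hM1
  rw [comm_iter hcomm M x] at hfixM
  exact (hFm.injective.iterate M) hfixM





lemma key (F G : ℝ → ℝ) (hFm : StrictMono F) (hFc : Continuous F)
    (hcomm : ∀ y, G (F y) = F (G y))
    (hfix_hi : ∀ y : ℝ, ∃ s, F s = s ∧ y ≤ s)
    (hfix_lo : ∀ y : ℝ, ∃ s, F s = s ∧ s ≤ y)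
    (haffL : ∀ w : ℝ, ∃ ε > 0, ∃ a b : ℝ, ∀ y ∈ Ioo (w-ε) w, G y = a*y+b)
    (haffR : ∀ w : ℝ, ∃ ε > 0, ∃ a b : ℝ, ∀ y ∈ Ioo w (w+ε), G y = a*y+b)
    {x c : ℝ} (hx : F x ≠ x) (hc : G c = c)
    (h1 : min x (F x) ≤ c) (h2 : c ≤ max x (F x)) : G x = x := by
  rcases lt_or_gt_of_ne hx with hlt | hgt
  · -- F x < x : mirror the situation
    have hminx : min x (F x) = F x := min_eq_right hlt.le
    have hmaxx : max x (F x) = x := max_eq_left hlt.le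
    rw [hminx] at h1; rw [hmaxx] at h2
    set F' := fun y : ℝ => -(F (-y)) with hF'
    set G' := fun y : ℝ => -(G (-y)) with hG'
    have hFm' : StrictMono F' := by
      intro s t hst
      have : F (-t) < F (-s) := hFm (by linarith)
      simp only [hF']; linarith
    have hFc' : Continuous F' := (hFc.comp continuous_neg).neg
    have hcomm' : ∀ y, G' (F' y) = F' (G' y) := by
      intro y; simp only [hF', hG', neg_neg]; rw [hcomm]
    have hfix_hi' : ∀ y : ℝ, ∃ s, F' s = s ∧ y ≤ s := by
      intro y
      obtain ⟨s, hs1, hs2⟩ := hfix_lo (-y)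
      exact ⟨-s, by simp only [hF', neg_neg, hs1], by linarith⟩
    have haffL' : ∀ w : ℝ, ∃ ε > 0, ∃ a b : ℝ, ∀ y ∈ Ioo (w-ε) w, G' y = a*y+b := by
      intro w
      obtain ⟨ε, hε, a, b, hab⟩ := haffR (-w)
      refine ⟨ε, hε, a, -b, fun y hy => ?_⟩
      have : G (-y) = a*(-y)+b := hab (-y) ⟨by linarith [hy.2], by linarith [hy.1]⟩
      simp only [hG', this]; ring
    have hres : G' (-x) = -x := by
      apply key_inc F' G' hFm' hFc' hcomm' hfix_hi' haffL'
        (x := -x) (c := -c)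
      · simp only [hF', neg_neg]; linarith
      · simp only [hG', neg_neg, hc]
      · linarith
      · simp only [hF', neg_neg]; linarith
    simp only [hG', neg_neg] at hres; linarith
  · have hminx : min x (F x) = x := min_eq_left hgt.le
    have hmaxx : max x (F x) = F x := max_eq_right hgt.le
    rw [hminx] at h1; rw [hmaxx] at h2
    exact key_inc F G hFm hFc hcomm hfix_hi haffL hgt hc h1 h2





lemma add_int {L : ℝ → ℝ} {k : ℝ} (h : ∀ x, L (x+1) = L x + k) :
    ∀ (x : ℝ) (n : ℤ), L (x + n) = L x + n * k := by
  intro x n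
  induction n using Int.induction_on with
  | zero => simp
  | succ n ih =>
    have e : (x + ((n:ℤ)+1 : ℤ) : ℝ) = (x + (n:ℤ)) + 1 := by push_cast; ring
    rw [e, h, ih]; push_cast; ring
  | pred n ih =>
    have e : (x + (-(n:ℤ)-1 : ℤ) : ℝ) + 1 = x + (-(n:ℤ) : ℤ) := by push_cast; ring
    have h2 := h (x + (-(n:ℤ)-1 : ℤ))
    rw [e, ih] at h2
    have : L (x + (-(n:ℤ)-1 : ℤ)) = L x + (-(n:ℤ)-1 : ℤ) * k := by
      push_cast at h2 ⊢; linarith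
    convert this using 3 <;> push_cast <;> ring

lemma strictAntiOn_glue {T : ℝ → ℝ} {a b c : ℝ}
    (h1 : StrictAntiOn T (Icc a b)) (h2 : StrictAntiOn T (Icc b c))
    (hab : a ≤ b) (hbc : b ≤ c) : StrictAntiOn T (Icc a c) := by
  intro x hx y hy hxy
  by_cases hyb : y ≤ b
  · exact h1 ⟨hx.1, by linarith [hy.1]⟩ ⟨by linarith [hx.1], hyb⟩ hxy
  push_neg at hyb
  by_cases hxb : b ≤ x
  · exact h2 ⟨hxb, by linarith [hy.2]⟩ ⟨hyb.le, hy.2⟩ hxy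
  push_neg at hxb
  calc T y < T b := h2 ⟨le_rfl, hbc⟩ ⟨hyb.le, hy.2⟩ hyb
    _ < T x := h1 ⟨hx.1, hxb.le⟩ ⟨hab, le_rfl⟩ hxb

lemma strictAnti_of_intervals (T : ℝ → ℝ) (P : ℝ)
    (h : ∀ n : ℤ, StrictAntiOn T (Icc (P+n) (P+n+1))) : StrictAnti T := by
  have hstep : ∀ (k : ℕ) (n : ℤ), StrictAntiOn T (Icc (P+n) (P+n+1+k)) := by
    intro k
    induction k with
    | zero => intro n; simpa using h n
    | succ k ih =>
      intro n
      have h2 := h (n+1+k)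
      have e : (P + ((n+1+(k:ℤ)) : ℤ) : ℝ) = P+n+1+k := by push_cast; ring
      have e2 : (P + ((n+1+(k:ℤ)) : ℤ) : ℝ) + 1 = P+n+1+((k+1 : ℕ) : ℝ) := by push_cast; ring
      have h2' : StrictAntiOn T (Icc (P+n+1+k) (P+n+1+((k+1:ℕ):ℝ))) := by
        rw [← e, ← e2]; exact h2
      have hglue := strictAntiOn_glue (ih n) h2'
        (by linarith [Nat.cast_nonneg (α := ℝ) k])
        (by push_cast; linarith [Nat.cast_nonneg (α := ℝ) k])
      exact hglue
  intro x y hxy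
  set n := ⌊x - P⌋ with hn
  set m := ⌊y - P⌋ with hm
  have hnm : n ≤ m := Int.floor_le_floor (by linarith)
  set k := (m - n).toNat with hk
  have hkk : (k : ℤ) = m - n := Int.toNat_of_nonneg (by omega)
  have hkr : (k : ℝ) = (m : ℝ) - n := by
    have h3 : ((k:ℤ) : ℝ) = ((m - n : ℤ) : ℝ) := by rw [hkk]
    push_cast at h3; linarith
  have hx1 : P + (n:ℝ) ≤ x := by
    have := Int.floor_le (x - P); rw [← hn] at this; linarith
  have hy1 : y < P + (m:ℝ) + 1 := by
    have := Int.lt_floor_add_one (y - P); rw [← hm] at this; linarith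
  have happ := hstep k n
  have hiend : P + (n:ℝ) + 1 + k = P + (m:ℝ) + 1 := by rw [hkr]; ring
  rw [hiend] at happ
  exact happ ⟨hx1, by linarith⟩ ⟨by
    have := Int.floor_le (y - P); rw [← hm] at this
    have hxn : (n:ℝ) ≤ (m:ℝ) := by exact_mod_cast hnm
    linarith, hy1.le⟩ hxy

lemma exp2_argl (z : Circle) : Circle.exp (2*π*(Complex.arg (z:ℂ) / (2*π))) = z := by
  rw [mul_div_cancel₀ _ (by positivity : (2*π:ℝ) ≠ 0)]
  exact Circle.exp_arg z

lemma exp2_half_turn (z : Circle) :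
    Circle.exp (2*π*(Complex.arg (-(z:ℂ)) / (2*π) + 1/2)) = z := by
  have h2 : (2*π) * (Complex.arg (-(z:ℂ)) / (2*π) + 1/2) = Complex.arg (-(z:ℂ)) + π := by
    field_simp
  rw [h2]
  apply Subtype.ext
  rw [Circle.coe_exp]
  have habs : ‖(-(z:ℂ))‖ = 1 := by
    rw [norm_neg]; exact Circle.norm_coe z
  have harg := Complex.norm_mul_exp_arg_mul_I (-(z:ℂ))
  rw [habs] at harg
  simp only [Complex.ofReal_one, one_mul] at harg
  push_cast
  rw [add_mul, Complex.exp_add, harg, Complex.exp_pi_mul_I]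
  ring

lemma neg_mem_slit (z : Circle) (hz : (z:ℂ) ∉ Complex.slitPlane) :
    -(z:ℂ) ∈ Complex.slitPlane := by
  rw [Complex.mem_slitPlane_iff] at hz ⊢
  push_neg at hz
  left
  rw [Complex.neg_re]
  rcases lt_or_eq_of_le hz.1 with h | h
  · linarith
  · exfalso
    have hz0 : (z:ℂ) = 0 := by
      apply Complex.ext <;> simp [← h, hz.2]
    have habs := Circle.norm_coe z
    rw [hz0] at habs
    simp at habs



end RevAux

namespace RevAux

lemma int_valued_const {D : ℝ → ℝ} (hc : Continuous D) (hi : ∀ x, ∃ n : ℤ, D x = n) :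
    ∀ x y, D x = D y := by
  have key : ∀ a b : ℝ, D a < D b → False := by
    intro a b hab
    obtain ⟨na, hna⟩ := hi a
    obtain ⟨nb, hnb⟩ := hi b
    have hmid1 : D a ≤ (na:ℝ) + 1/2 := by rw [hna]; linarith
    have hmid2 : ((na:ℝ) + 1/2) ≤ D b := by
      have hlt : na < nb := by rw [hna, hnb] at hab; exact_mod_cast hab
      have h1 : (na:ℝ) + 1 ≤ nb := by exact_mod_cast hlt
      rw [hnb]; linarith
    have hex : ∃ s, D s = (na:ℝ) + 1/2 := by
      rcases le_total a b with hab' | hab'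
      · obtain ⟨s, _, hs⟩ := intermediate_value_Icc hab' hc.continuousOn ⟨hmid1, hmid2⟩
        exact ⟨s, hs⟩
      · obtain ⟨s, _, hs⟩ := intermediate_value_Icc' hab' hc.continuousOn ⟨hmid1, hmid2⟩
        exact ⟨s, hs⟩
    obtain ⟨s, hs⟩ := hex
    obtain ⟨ns, hns⟩ := hi s
    rw [hns] at hs
    have h2 : ((2*ns : ℤ) : ℝ) = ((2*na + 1 : ℤ) : ℝ) := by push_cast; linarith
    have h3 : (2*ns : ℤ) = 2*na + 1 := by exact_mod_cast h2
    omega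
  intro x y
  by_contra hne
  rcases lt_or_gt_of_ne hne with hl | hl
  exacts [key x y hl, key y x hl]

end RevAux

/-- Let `f ∈ PL⁺(S¹)` with rotation number `0` (equivalently, `f` has a fixed
point) be reversed by some `h ∈ PL⁻(S¹)` (`h f h⁻¹ = f⁻¹`, equivalently
`f ∘ h ∘ f = h`).  Then `f` is strongly reversible in `PL(S¹)` by an
orientation-reversing involution. -/
theorem rho_zero_reversed_by_PLminus_strongly_reversible (f h : Circle ≃ₜ Circle)
    (hf : PLplus f) (hfix : ∃ z : Circle, f z = z)
    (hh : PLminus h) (hrev : ∀ z : Circle, f (h (f z)) = h z) :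
    ∃ τ : Circle ≃ₜ Circle, PLminus τ ∧ (∀ z : Circle, τ (τ z) = z) ∧
      ∀ z : Circle, f (τ (f z)) = τ z := by
  classical
  obtain ⟨F, hFm, hFPL, hFlift⟩ := hf
  obtain ⟨H, hHa, hHPL, hHlift⟩ := hh
  obtain ⟨BH, hBHfin, hBHgerm⟩ := hHPL
  -- normalize the lift of f so that it has a genuine fixed point
  obtain ⟨z₀, hz₀⟩ := hfix
  obtain ⟨x₀, hx₀⟩ := RevAux.exp2_surj z₀
  have h1 := hFlift.1 x₀
  rw [hx₀, hz₀] at h1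
  obtain ⟨k, hk⟩ := RevAux.exp2_eq_iff.mp (h1.symm.trans hx₀.symm)
  set F0 : ℝ → ℝ := fun x => F x - k with hF0def
  have hF0m : StrictMono F0 := fun a b hab => by
    simp only [hF0def]; exact sub_lt_sub_right (hFm hab) _
  have hF0per : ∀ x, F0 (x+1) = F0 x + 1 := fun x => by
    simp only [hF0def]; rw [hFlift.2]; ring
  have hF0n : ∀ (x : ℝ) (n : ℤ), F0 (x + n) = F0 x + n := by
    intro x n
    have := RevAux.add_int hF0per x n
    rw [this]; ring
  have hF0fix : F0 x₀ = x₀ := by simp only [hF0def]; rw [hk]; ring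
  have hF0lift : ∀ x, f (Circle.exp (2*π*x)) = Circle.exp (2*π*(F0 x)) := by
    intro x
    rw [hFlift.1 x]
    exact RevAux.exp2_eq_iff.mpr ⟨k, by simp only [hF0def]; ring⟩
  have hF0surj : Function.Surjective F0 :=
    RevAux.lift_surj f F0 hF0lift (fun x n => ⟨x + n, by rw [hF0n]⟩)
  have hF0cont : Continuous F0 := RevAux.cont_of_mono_surj hF0m hF0surj
  -- basic facts about the lift H of h
  have hHn : ∀ (x : ℝ) (n : ℤ), H (x + n) = H x - n := by
    intro x n
    have := RevAux.add_int hHlift.2 x n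
    rw [this]; ring
  have hHsurj : Function.Surjective H := by
    apply RevAux.lift_surj h H hHlift.1
    intro x n
    refine ⟨x + ((-n : ℤ) : ℝ), ?_⟩
    rw [hHn]; push_cast; ring
  have hHcont : Continuous H := RevAux.cont_of_anti_surj hHa hHsurj
  set eH : ℝ ≃ ℝ := Equiv.ofBijective H ⟨hHa.injective, hHsurj⟩ with heH
  set Hinv : ℝ → ℝ := fun y => eH.symm y with hHinvdef
  have hinv : ∀ y, H (Hinv y) = y := fun y => eH.apply_symm_apply y
  have hinv2 : ∀ x, Hinv (H x) = x := fun x => eH.symm_apply_apply x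
  have hHinva : StrictAnti Hinv := by
    intro a b hab
    rw [← hinv a, ← hinv b] at hab
    exact hHa.lt_iff_gt.mp hab
  have hHinvn : ∀ (x : ℝ) (n : ℤ), Hinv (x + n) = Hinv x - n := by
    intro x n
    apply hHa.injective
    rw [hinv, show Hinv x - (n:ℝ) = Hinv x + ((-n : ℤ):ℝ) by push_cast; ring, hHn, hinv]
    push_cast; ring
  -- fixed points of H : the points P and Q
  have hφc : Continuous (fun x : ℝ => H x - x) := hHcont.sub continuous_id
  set n₀ : ℕ := ⌈|H 0|⌉₊ + 1 with hn₀
  have hH0bound : |H 0| ≤ (n₀:ℝ) := by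
    rw [hn₀]; push_cast; linarith [Nat.le_ceil (|H 0|)]
  have hval1 : H (-(n₀:ℝ)) - (-(n₀:ℝ)) > 0 := by
    have e : (-(n₀:ℝ)) = 0 + ((-(n₀:ℕ) : ℤ) : ℝ) := by push_cast; ring
    rw [e, hHn]
    have h1 : -(|H 0|) ≤ H 0 := neg_abs_le _
    have h2 : (1:ℝ) ≤ (n₀:ℝ) := by rw [hn₀]; push_cast; linarith [Nat.cast_nonneg (α := ℝ) ⌈|H 0|⌉₊]
    have hb := hH0bound
    push_cast at hb h2 ⊢
    nlinarith [hb, h2, h1]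
  have hval2 : H ((n₀:ℝ)) - ((n₀:ℝ)) < 0 := by
    have e : ((n₀:ℝ)) = 0 + (((n₀:ℕ) : ℤ) : ℝ) := by push_cast; ring
    rw [e, hHn]
    have h1 : H 0 ≤ |H 0| := le_abs_self _
    have h2 : (1:ℝ) ≤ (n₀:ℝ) := by rw [hn₀]; push_cast; linarith [Nat.cast_nonneg (α := ℝ) ⌈|H 0|⌉₊]
    have hb := hH0bound
    push_cast at hb h2 ⊢
    nlinarith [hb, h2, h1]
  obtain ⟨P, hPIcc, hφP⟩ := intermediate_value_Icc' (show -(n₀:ℝ) ≤ (n₀:ℝ) by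
      have : (0:ℝ) ≤ (n₀:ℝ) := Nat.cast_nonneg _
      linarith) hφc.continuousOn ⟨hval2.le, hval1.le⟩
  have hHP : H P = P := by dsimp at hφP; linarith
  have hψc : Continuous (fun x : ℝ => H x - x + 1) := by continuity
  have hψP : H P - P + 1 = 1 := by rw [hHP]; ring
  have hHP1 : H (P + 1) = H P - 1 := by
    have := hHn P 1; push_cast at this; linarith
  have hψP1 : H (P+1) - (P+1) + 1 = -1 := by rw [hHP1, hHP]; ring
  have hmemQ : (0:ℝ) ∈ Icc (H (P+1) - (P+1) + 1) (H P - P + 1) := by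
    rw [hψP, hψP1]; constructor <;> norm_num
  obtain ⟨Q, hQIcc, hψQ⟩ := intermediate_value_Icc' (show P ≤ P + 1 by linarith)
    hψc.continuousOn hmemQ
  have hHQ : H Q = Q - 1 := by dsimp at hψQ; linarith
  have hPQ : P < Q := by
    rcases lt_or_eq_of_le hQIcc.1 with hc | hc
    · exact hc
    · exfalso; rw [← hc] at hHQ; rw [hHP] at hHQ; linarith
  have hQP1 : Q < P + 1 := by
    rcases lt_or_eq_of_le hQIcc.2 with hc | hc
    · exact hc
    · exfalso; rw [hc, hHP1, hHP] at hHQ; linarith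
  -- the exact functional equation F0 ∘ H ∘ F0 = H
  have hDint : ∀ x, ∃ n : ℤ, F0 (H (F0 x)) - H x = n := by
    intro x
    have e1 := hrev (Circle.exp (2*π*x))
    rw [hF0lift, hHlift.1, hF0lift, hHlift.1] at e1
    obtain ⟨n, hn⟩ := RevAux.exp2_eq_iff.mp e1
    exact ⟨n, by linarith⟩
  have hDcont : Continuous (fun x => F0 (H (F0 x)) - H x) :=
    (hF0cont.comp (hHcont.comp hF0cont)).sub hHcont
  have hDconst := RevAux.int_valued_const hDcont hDint
  obtain ⟨m, hm⟩ := hDint x₀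
  have hmzero : m = 0 := by
    have hy1 : F0 (H x₀) = H x₀ + m := by
      have := hm
      rw [hF0fix] at this
      linarith
    set y : ℝ := H x₀ with hy
    set j : ℤ := ⌊y - x₀⌋ with hj
    have hw1 : F0 (x₀ + (j:ℝ)) = x₀ + (j:ℝ) := by rw [hF0n, hF0fix]
    have hw2 : F0 (x₀ + (j:ℝ) + 1) = x₀ + (j:ℝ) + 1 := by
      have : x₀ + (j:ℝ) + 1 = x₀ + ((j+1 : ℤ):ℝ) := by push_cast; ring
      rw [this, hF0n, hF0fix]
    have hyb1 : x₀ + (j:ℝ) ≤ y := by linarith [Int.floor_le (y - x₀)]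
    have hyb2 : y ≤ x₀ + (j:ℝ) + 1 := by linarith [Int.lt_floor_add_one (y - x₀)]
    have horb : ∀ nn : ℕ, F0^[nn] y = y + (nn:ℝ)*(m:ℝ) ∧
        x₀ + (j:ℝ) ≤ F0^[nn] y ∧ F0^[nn] y ≤ x₀ + (j:ℝ) + 1 := by
      intro nn
      induction nn with
      | zero => simpa using ⟨hyb1, hyb2⟩
      | succ nn ih =>
        have hstep : F0^[nn+1] y = F0 (F0^[nn] y) := Function.iterate_succ_apply' F0 nn y
        constructor
        · rw [hstep, ih.1]
          have e : y + (nn:ℝ)*(m:ℝ) = y + ((nn*m : ℤ):ℝ) := by push_cast; ring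
          rw [e, hF0n, hy1]
          push_cast; ring
        · constructor
          · rw [hstep, ← hw1]
            exact hF0m.monotone ih.2.1
          · rw [hstep, ← hw2]
            exact hF0m.monotone ih.2.2
    have h2 := (horb 2).1
    have h2b := (horb 2).2
    have hb1 : (2:ℝ)*(m:ℝ) ≤ 1 := by
      have := h2b.2
      rw [h2] at this
      push_cast at this ⊢
      linarith
    have hb2 : (-1:ℝ) ≤ 2*(m:ℝ) := by
      have := h2b.1
      rw [h2] at this
      push_cast at this ⊢
      linarith
    have hc1 : (2*m : ℤ) ≤ 1 := by exact_mod_cast hb1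
    have hc2 : (-1 : ℤ) ≤ 2*m := by exact_mod_cast hb2
    omega
  have hFHF : ∀ x, F0 (H (F0 x)) = H x := by
    intro x
    have := hDconst x x₀
    rw [hm, hmzero] at this
    push_cast at this
    linarith
  -- inverse of F0
  set eF : ℝ ≃ ℝ := Equiv.ofBijective F0 ⟨hF0m.injective, hF0surj⟩ with heF
  set Finv : ℝ → ℝ := fun y => eF.symm y with hFinvdef
  have hFinv1 : ∀ y, F0 (Finv y) = y := fun y => eF.apply_symm_apply y
  have hFinv2 : ∀ x, Finv (F0 x) = x := fun x => eF.symm_apply_apply x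
  have hstar : ∀ y, Finv (Hinv (Finv y)) = Hinv y := by
    intro y
    have hx := hFHF (Finv (Hinv (Finv y)))
    rw [hFinv1, hinv, hFinv1] at hx
    have := congrArg Hinv hx
    rw [hinv2] at this
    exact this.symm
  have hFHinvF : ∀ x, F0 (Hinv (F0 x)) = Hinv x := by
    intro x
    have h1 := hstar (F0 x)
    rw [hFinv2] at h1
    rw [← h1, hFinv1]
  have hF0H : ∀ y, F0 (H y) = H (Finv y) := by
    intro y
    have := hFHF (Finv y)
    rw [hFinv1] at this
    exact this
  have hHF0 : ∀ x, H (F0 x) = Finv (H x) := by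
    intro x
    have h2 := congrArg Finv (hFHF x)
    rw [hFinv2] at h2
    exact h2
  have hcommG : ∀ y, H (H (F0 y)) = F0 (H (H y)) := by
    intro y
    rw [hHF0 y, hF0H (H y)]
  -- density of fixed points of F0
  have hfix_hi : ∀ y : ℝ, ∃ s, F0 s = s ∧ y ≤ s := fun y =>
    ⟨x₀ + ((⌈y - x₀⌉ : ℤ) : ℝ), by rw [hF0n, hF0fix], by linarith [Int.le_ceil (y - x₀)]⟩
  have hfix_lo : ∀ y : ℝ, ∃ s, F0 s = s ∧ s ≤ y := fun y =>
    ⟨x₀ + ((⌊y - x₀⌋ : ℤ) : ℝ), by rw [hF0n, hF0fix], by linarith [Int.floor_le (y - x₀)]⟩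
  -- affine germs of H ∘ H
  have hbigBfin : ∀ r : ℝ, ((BH ∪ H ⁻¹' BH) ∩ Icc (-r) r).Finite :=
    RevAux.locfin_union hBHfin (RevAux.locfin_preimage hHa hinv hinv2 hBHfin)
  have hGloc : ∀ y, y ∉ BH ∪ H ⁻¹' BH → ∃ a b : ℝ, ∀ᶠ z in nhds y, H (H z) = a*z+b := by
    intro y hy
    obtain ⟨a, b, hab⟩ := hBHgerm y (fun hc => hy (Or.inl hc))
    obtain ⟨a', b', hab'⟩ := hBHgerm (H y) (fun hc => hy (Or.inr hc))
    exact ⟨a'*a, a'*b+b', RevAux.germ_comp hHcont hab hab'⟩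
  have haffL : ∀ w : ℝ, ∃ ε > 0, ∃ a b : ℝ, ∀ y ∈ Ioo (w-ε) w, H (H y) = a*y+b := by
    intro w
    obtain ⟨ε, hε, hgap⟩ := RevAux.gapL hbigBfin w
    obtain ⟨a, b, hab⟩ := RevAux.loc_affine_interval (show w - ε < w by linarith)
      (fun y hy => hGloc y (hgap y hy))
    exact ⟨ε, hε, a, b, hab⟩
  have haffR : ∀ w : ℝ, ∃ ε > 0, ∃ a b : ℝ, ∀ y ∈ Ioo w (w+ε), H (H y) = a*y+b := by
    intro w
    obtain ⟨ε, hε, hgap⟩ := RevAux.gapR hbigBfin w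
    obtain ⟨a, b, hab⟩ := RevAux.loc_affine_interval (show w < w + ε by linarith)
      (fun y hy => hGloc y (hgap y hy))
    exact ⟨ε, hε, a, b, hab⟩
  -- rigidity
  have keyG : ∀ x c : ℝ, F0 x ≠ x → H (H c) = c → min x (F0 x) ≤ c → c ≤ max x (F0 x) →
      H (H x) = x := by
    intro x c h1 h2 h3 h4
    exact RevAux.key F0 (fun z => H (H z)) hF0m hF0cont hcommG hfix_hi hfix_lo
      haffL haffR h1 h2 h3 h4
  -- boundary values
  have hHPn : ∀ n : ℤ, H (P + n) = P - n := fun n => by rw [hHn, hHP]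
  have hHQn : ∀ n : ℤ, H (Q + n) = Q - 1 - n := fun n => by rw [hHn, hHQ]
  have hGPn : ∀ n : ℤ, H (H (P + n)) = P + n := by
    intro n
    rw [hHPn, show P - (n:ℝ) = P + ((-n : ℤ):ℝ) by push_cast; ring, hHPn]
    push_cast; ring
  have hGQn : ∀ n : ℤ, H (H (Q + n)) = Q + n := by
    intro n
    rw [hHQn, show Q - 1 - (n:ℝ) = Q + ((-1 - n : ℤ):ℝ) by push_cast; ring, hHQn]
    push_cast; ring
  have hHinvPn : ∀ n : ℤ, Hinv (P + n) = P - n := by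
    intro n
    have h2 := hGPn n
    rw [hHPn] at h2
    rw [← h2, hinv2]
  have hHinvQn : ∀ n : ℤ, Hinv (Q + n) = Q - 1 - n := by
    intro n
    have h2 := hGQn n
    rw [hHQn] at h2
    rw [← h2, hinv2]
  -- the region A and the candidate involution T
  set inA : ℝ → Prop := fun x => ∃ n : ℤ, P + n ≤ x ∧ x ≤ Q + n with hinAdef
  set T : ℝ → ℝ := fun x => if inA x then H x else Hinv x with hTdef
  have hTA : ∀ x, inA x → T x = H x := by
    intro x hx
    rw [hTdef]
    exact if_pos hx
  have hcover : ∀ x : ℝ, ∃ n : ℤ, (P + n ≤ x ∧ x ≤ Q + n) ∨ (Q + n ≤ x ∧ x ≤ P + n + 1) := by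
    intro x
    set nn : ℤ := ⌊x - P⌋ with hnn
    have h1 : P + (nn:ℝ) ≤ x := by linarith [Int.floor_le (x-P)]
    have h2 : x < P + (nn:ℝ) + 1 := by linarith [Int.lt_floor_add_one (x-P)]
    by_cases hc : x ≤ Q + (nn:ℝ)
    · exact ⟨nn, Or.inl ⟨h1, hc⟩⟩
    · push_neg at hc
      exact ⟨nn, Or.inr ⟨hc.le, h2.le⟩⟩
  have hbdry : ∀ x, inA x → (∃ n : ℤ, Q + n ≤ x ∧ x ≤ P + n + 1) → H x = Hinv x := by
    rintro x ⟨mm, hm1, hm2⟩ ⟨nn, hn1, hn2⟩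
    rcases le_or_gt mm nn with hmn | hmn
    · have hcast : (mm:ℝ) ≤ (nn:ℝ) := by exact_mod_cast hmn
      have hxQ : x = Q + nn := le_antisymm (by linarith) hn1
      rw [hxQ, hHQn, hHinvQn]
    · have hcast : (nn:ℝ) + 1 ≤ (mm:ℝ) := by exact_mod_cast hmn
      have hxP : x = P + ((nn+1 : ℤ):ℝ) := by
        have : x = P + (nn:ℝ) + 1 := le_antisymm hn2 (by linarith)
        rw [this]; push_cast; ring
      rw [hxP, hHPn, hHinvPn]
  have hTB : ∀ x, ∀ n : ℤ, Q + n ≤ x → x ≤ P + n + 1 → T x = Hinv x := by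
    intro x n hx1 hx2
    by_cases hx : inA x
    · rw [hTA x hx]
      exact hbdry x hx ⟨n, hx1, hx2⟩
    · rw [hTdef]
      exact if_neg hx
  -- T is strictly decreasing
  have hTanti : StrictAnti T := by
    apply RevAux.strictAnti_of_intervals T P
    intro n
    have hA : StrictAntiOn T (Icc (P+(n:ℝ)) (Q+(n:ℝ))) := by
      intro u hu v hv huv
      rw [hTA u ⟨n, hu.1, hu.2⟩, hTA v ⟨n, hv.1, hv.2⟩]
      exact hHa huv
    have hB : StrictAntiOn T (Icc (Q+(n:ℝ)) (P+(n:ℝ)+1)) := by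
      intro u hu v hv huv
      rw [hTB u n hu.1 hu.2, hTB v n hv.1 hv.2]
      exact hHinva huv
    exact RevAux.strictAntiOn_glue hA hB (by linarith) (by linarith)
  -- T is an involution
  have hTT : ∀ x, T (T x) = x := by
    intro x
    obtain ⟨n, hn | hn⟩ := hcover x
    · rw [hTA x ⟨n, hn.1, hn.2⟩]
      have hb1 : Q + ((-1 - n : ℤ):ℝ) ≤ H x := by
        have := hHa.antitone hn.2
        rw [hHQn] at this
        push_cast; linarith
      have hb2 : H x ≤ P + ((-1-n:ℤ):ℝ) + 1 := by
        have := hHa.antitone hn.1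
        rw [hHPn] at this
        push_cast; linarith
      rw [hTB (H x) (-1-n) hb1 hb2, hinv2]
    · rw [hTB x n hn.1 hn.2]
      have hb1 : P + ((-1-n:ℤ):ℝ) ≤ Hinv x := by
        have h2 := hHinva.antitone hn.2
        have h3 : Hinv (P + (n:ℝ) + 1) = P - ((n+1:ℤ):ℝ) := by
          rw [show P + (n:ℝ) + 1 = P + ((n+1:ℤ):ℝ) by push_cast; ring, hHinvPn]
        rw [h3] at h2
        push_cast at h2 ⊢; linarith
      have hb2 : Hinv x ≤ Q + ((-1-n:ℤ):ℝ) := by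
        have h2 := hHinva.antitone hn.1
        rw [hHinvQn] at h2
        push_cast; linarith
      rw [hTA (Hinv x) ⟨-1-n, hb1, hb2⟩, hinv]
  have hHHinv_eq : ∀ x, H (H x) = x → H x = Hinv x := by
    intro x hx
    have := congrArg Hinv hx
    rw [hinv2] at this
    exact this
  -- T reverses F0
  have hFTF : ∀ x, F0 (T (F0 x)) = T x := by
    intro x
    obtain ⟨n, hn | hn⟩ := hcover x
    · rw [hTA x ⟨n, hn.1, hn.2⟩]
      by_cases hA : inA (F0 x)
      · rw [hTA _ hA]
        exact hFHF x
      · obtain ⟨mm, hm | hm⟩ := hcover (F0 x)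
        · exact absurd ⟨mm, hm.1, hm.2⟩ hA
        · rw [hTB _ mm hm.1 hm.2, hFHinvF]
          have hne : F0 x ≠ x := by
            intro he
            exact hA (by rw [he]; exact ⟨n, hn.1, hn.2⟩)
          rcases lt_or_gt_of_ne hne with hlt | hgt
          · have hcb : F0 x < P + (n:ℝ) := by
              by_contra hcc
              push_neg at hcc
              exact hA ⟨n, hcc, by linarith⟩
            have hGx := keyG x (P+(n:ℝ)) hne (hGPn n)
              (by rw [min_eq_right hlt.le]; linarith)
              (by rw [max_eq_left hlt.le]; linarith)
            exact (hHHinv_eq x hGx).symm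
          · have hcb : Q + (n:ℝ) < F0 x := by
              by_contra hcc
              push_neg at hcc
              exact hA ⟨n, by linarith, hcc⟩
            have hGx := keyG x (Q+(n:ℝ)) hne (hGQn n)
              (by rw [min_eq_left hgt.le]; linarith)
              (by rw [max_eq_right hgt.le]; linarith)
            exact (hHHinv_eq x hGx).symm
    · rw [hTB x n hn.1 hn.2]
      by_cases hA : inA (F0 x)
      · obtain ⟨mm, hm1, hm2⟩ := hA
        rw [hTA _ ⟨mm, hm1, hm2⟩]
        rw [hFHF]
        by_cases hxA : inA x
        · exact hbdry x hxA ⟨n, hn.1, hn.2⟩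
        · have hne : F0 x ≠ x := by
            intro he
            exact hxA (by rw [← he]; exact ⟨mm, hm1, hm2⟩)
          rcases lt_or_gt_of_ne hne with hlt | hgt
          · have hcb : Q + (mm:ℝ) < x := by
              by_contra hcc
              push_neg at hcc
              exact hxA ⟨mm, by linarith, hcc⟩
            exact hHHinv_eq x (keyG x (Q+(mm:ℝ)) hne (hGQn mm)
              (by rw [min_eq_right hlt.le]; linarith)
              (by rw [max_eq_left hlt.le]; linarith))
          · have hcb : x < P + (mm:ℝ) := by
              by_contra hcc
              push_neg at hcc
              exact hxA ⟨mm, hcc, by linarith⟩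
            exact hHHinv_eq x (keyG x (P+(mm:ℝ)) hne (hGPn mm)
              (by rw [min_eq_left hgt.le]; linarith)
              (by rw [max_eq_right hgt.le]; linarith))
      · obtain ⟨mm, hm | hm⟩ := hcover (F0 x)
        · exact absurd ⟨mm, hm.1, hm.2⟩ hA
        · rw [hTB _ mm hm.1 hm.2]
          exact hFHinvF x
  -- piecewise linearity of T
  have hBTfin : ∀ r : ℝ, (((BH ∪ H '' BH) ∪
      ({y : ℝ | ∃ n : ℤ, y = P + n} ∪ {y : ℝ | ∃ n : ℤ, y = Q + n})) ∩ Icc (-r) r).Finite :=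
    RevAux.locfin_union (RevAux.locfin_union hBHfin (RevAux.locfin_image hHa hinv hBHfin))
      (RevAux.locfin_union (RevAux.lattice_fin P) (RevAux.lattice_fin Q))
  have hBTgerm : ∀ x ∉ ((BH ∪ H '' BH) ∪
      ({y : ℝ | ∃ n : ℤ, y = P + n} ∪ {y : ℝ | ∃ n : ℤ, y = Q + n})),
      ∃ a b : ℝ, ∀ᶠ y in nhds x, T y = a*y+b := by
    intro x hx
    have hxP : ∀ n : ℤ, x ≠ P + n := fun n he => hx (Or.inr (Or.inl ⟨n, he⟩))
    have hxQ : ∀ n : ℤ, x ≠ Q + n := fun n he => hx (Or.inr (Or.inr ⟨n, he⟩))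
    have hxBH : x ∉ BH := fun hc => hx (Or.inl (Or.inl hc))
    set nn : ℤ := ⌊x - P⌋ with hnn
    have h1 : P + (nn:ℝ) ≤ x := by linarith [Int.floor_le (x-P)]
    have h1' : P + (nn:ℝ) < x := lt_of_le_of_ne h1 (fun he => hxP nn he.symm)
    have h2 : x < P + (nn:ℝ) + 1 := by linarith [Int.lt_floor_add_one (x-P)]
    rcases lt_trichotomy x (Q + (nn:ℝ)) with hc | hc | hc
    · obtain ⟨a, b, hab⟩ := hBHgerm x hxBH
      refine ⟨a, b, ?_⟩
      have hev : Ioo (P + (nn:ℝ)) (Q + (nn:ℝ)) ∈ nhds x := Ioo_mem_nhds h1' hc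
      filter_upwards [hab, hev] with y hy1 hy2
      rw [hTA y ⟨nn, hy2.1.le, hy2.2.le⟩]
      exact hy1
    · exact absurd hc (hxQ nn)
    · have hHinvxB : Hinv x ∉ BH := by
        intro hcon
        exact hx (Or.inl (Or.inr ⟨Hinv x, hcon, hinv x⟩))
      obtain ⟨a, b, hab⟩ := RevAux.hinv_affine hHa hinv hinv2 (hBHgerm (Hinv x) hHinvxB)
      refine ⟨a, b, ?_⟩
      have hev : Ioo (Q + (nn:ℝ)) (P + (nn:ℝ) + 1) ∈ nhds x := Ioo_mem_nhds hc h2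
      filter_upwards [hab, hev] with y hy1 hy2
      rw [hTB y nn hy2.1.le hy2.2.le]
      exact hy1
  -- integer translation property of T
  have hTn : ∀ (x : ℝ) (n : ℤ), T (x + n) = T x - n := by
    intro x n
    have hiA : inA (x + (n:ℝ)) ↔ inA x := by
      constructor
      · rintro ⟨mm, hm1, hm2⟩
        refine ⟨mm - n, ?_, ?_⟩ <;> push_cast <;> push_cast at hm1 hm2 <;> linarith
      · rintro ⟨mm, hm1, hm2⟩
        refine ⟨mm + n, ?_, ?_⟩ <;> push_cast <;> linarith
    by_cases hx : inA x
    · rw [hTA _ (hiA.mpr hx), hTA _ hx, hHn]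
    · have e1 : T (x + (n:ℝ)) = Hinv (x + (n:ℝ)) := by
        rw [hTdef]; exact if_neg (fun hcc => hx (hiA.mp hcc))
      have e2 : T x = Hinv x := by rw [hTdef]; exact if_neg hx
      rw [e1, e2, hHinvn]
  have hTexp : ∀ a b : ℝ, Circle.exp (2*π*a) = Circle.exp (2*π*b) →
      Circle.exp (2*π*(T a)) = Circle.exp (2*π*(T b)) := by
    intro a b hab
    obtain ⟨n, hn⟩ := RevAux.exp2_eq_iff.mp hab
    rw [hn, hTn]
    exact RevAux.exp2_eq_iff.mpr ⟨-n, by push_cast; ring⟩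
  -- the circle involution
  set τfun : Circle → Circle :=
    fun z => Circle.exp (2*π*(T (Complex.arg (z:ℂ) / (2*π)))) with hτdef
  have hτlift : ∀ x : ℝ, τfun (Circle.exp (2*π*x)) = Circle.exp (2*π*(T x)) := by
    intro x
    rw [hτdef]
    exact hTexp _ x (RevAux.exp2_argl _)
  have hTsurj : Function.Surjective T := fun y => ⟨T y, hTT y⟩
  have hTcont : Continuous T := RevAux.cont_of_anti_surj hTanti hTsurj
  have hexp2cont : Continuous (fun r : ℝ => Circle.exp (2*π*r)) :=
    Circle.exp.continuous.comp (continuous_const.mul continuous_id)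
  have hτcont : Continuous τfun := by
    rw [continuous_iff_continuousAt]
    intro z₀
    by_cases hz : (z₀ : ℂ) ∈ Complex.slitPlane
    · have harg : ContinuousAt (fun z : Circle => Complex.arg (z:ℂ) / (2*π)) z₀ :=
        ((Complex.continuousAt_arg hz).comp continuous_subtype_val.continuousAt).div_const _
      exact ((hexp2cont.comp hTcont).continuousAt.comp harg)
    · have hslit : -(z₀ : ℂ) ∈ Complex.slitPlane := RevAux.neg_mem_slit z₀ hz
      have hneg1 : ContinuousAt (fun z : Circle => -(z:ℂ)) z₀ :=
        (continuous_subtype_val.neg).continuousAt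
      have hneg2 : ContinuousAt (fun z : Circle => Complex.arg (-(z:ℂ))) z₀ :=
        ContinuousAt.comp (g := Complex.arg) (Complex.continuousAt_arg hslit) hneg1
      have hβcont : ContinuousAt (fun z : Circle => Complex.arg (-(z:ℂ)) / (2*π) + 1/2) z₀ :=
        (hneg2.div_const _).add continuousAt_const
      have heq : τfun = fun z : Circle =>
          Circle.exp (2*π*(T (Complex.arg (-(z:ℂ))/(2*π) + 1/2))) := by
        funext z
        rw [hτdef]
        refine hTexp (Complex.arg (z:ℂ)/(2*π)) (Complex.arg (-(z:ℂ))/(2*π) + 1/2) ?_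
        rw [RevAux.exp2_argl, RevAux.exp2_half_turn]
      rw [heq]
      exact ((hexp2cont.comp hTcont).continuousAt.comp hβcont)
  have hτinvol : ∀ z : Circle, τfun (τfun z) = z := by
    intro z
    obtain ⟨x, hxz⟩ := RevAux.exp2_surj z
    have e1 : τfun (τfun (Circle.exp (2*π*x))) = Circle.exp (2*π*(T (T x))) := by
      rw [hτlift x]
      exact hτlift (T x)
    rw [← hxz, e1, hTT]
  set τ : Circle ≃ₜ Circle :=
    { toFun := τfun
      invFun := τfun
      left_inv := hτinvol
      right_inv := hτinvol
      continuous_toFun := hτcont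
      continuous_invFun := hτcont } with hτhdef
  have hτcoe : ∀ z : Circle, τ z = τfun z := fun _ => rfl
  refine ⟨τ, ⟨T, hTanti, ⟨(BH ∪ H '' BH) ∪
      ({y : ℝ | ∃ n : ℤ, y = P + n} ∪ {y : ℝ | ∃ n : ℤ, y = Q + n}), hBTfin, hBTgerm⟩,
      ?_, ?_⟩, ?_, ?_⟩
  · intro x
    rw [hτcoe]
    exact hτlift x
  · intro x
    have := hTn x 1
    push_cast at this
    linarith
  · intro z
    rw [hτcoe, hτcoe]
    exact hτinvol z
  · intro z
    obtain ⟨x, hxz⟩ := RevAux.exp2_surj z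
    rw [← hxz, hτcoe, hτcoe, hF0lift x, hτlift, hF0lift, hFTF]
    exact (hτlift x).symm
end

section
/- Let f ∈ PL⁻(S¹). Then f is reversed by some h ∈ PL(S¹) that fixes each of the two fixed points of f if and only if f² = id. -/
open Set Real Filter

namespace RevAux

lemma exp2pi_eq {u v : ℝ} : Circle.exp (2*π*u) = Circle.exp (2*π*v) ↔ ∃ n : ℤ, u = v + n := by
  rw [Circle.exp_eq_exp]
  constructor
  · rintro ⟨m, hm⟩
    refine ⟨m, mul_left_cancel₀ (show (2*π : ℝ) ≠ 0 by positivity) ?_⟩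
    rw [hm]; ring
  · rintro ⟨n, hn⟩; exact ⟨n, by rw [hn]; ring⟩

lemma int_translate {F : ℝ → ℝ} {k : ℝ} (h : ∀ x, F (x+1) = F x + k) :
    ∀ (n : ℤ) (x : ℝ), F (x + n) = F x + n * k := by
  have h' : ∀ x : ℝ, F (x - 1) = F x - k := by
    intro x
    have h2 := h (x - 1)
    rw [sub_add_cancel] at h2
    linarith
  intro n
  induction n using Int.induction_on with
  | zero => simp
  | succ m ih =>
      intro x
      have hx := ih x
      push_cast at hx ⊢
      rw [show x + ((m:ℝ)+1) = (x + (m:ℝ)) + 1 by ring, h, hx]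
      ring
  | pred m ih =>
      intro x
      have hx := ih x
      push_cast at hx ⊢
      rw [show x + (-(m:ℝ)-1) = (x + -(m:ℝ)) - 1 by ring, h', hx]
      ring

lemma lift_surjective (f : Circle ≃ₜ Circle) (F : ℝ → ℝ) (k : ℝ) (hk : k = 1 ∨ k = -1)
    (hl : IsLift f F k) : Function.Surjective F := by
  intro y
  obtain ⟨w, hw⟩ := f.surjective (Circle.exp (2*π*y))
  have harg : Circle.exp (2*π*(Complex.arg (w : ℂ) / (2*π))) = w := by
    rw [show 2*π*(Complex.arg (w:ℂ) / (2*π)) = Complex.arg (w:ℂ) by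
      field_simp]
    exact Circle.exp_arg w
  set t := Complex.arg (w : ℂ) / (2*π) with ht
  have : f (Circle.exp (2*π*t)) = Circle.exp (2*π*y) := by rw [harg, hw]
  rw [hl.1 t] at this
  obtain ⟨n, hn⟩ := exp2pi_eq.mp this
  have htr := int_translate hl.2
  rcases hk with hk | hk
  · subst hk
    exact ⟨t + (-n : ℤ), by rw [htr (-n) t]; push_cast; rw [hn]; ring⟩
  · subst hk
    exact ⟨t + (n : ℤ), by rw [htr n t]; push_cast; rw [hn]; ring⟩

lemma cont_of_mono_surj_s17 {F : ℝ → ℝ} (h : Monotone F) (hs : Function.Surjective F) :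
    Continuous F := h.continuous_of_surjective hs

lemma cont_of_anti_surj_s17 {F : ℝ → ℝ} (h : StrictAnti F) (hs : Function.Surjective F) :
    Continuous F := by
  have hm : Monotone (fun x => -(F x)) := fun a b hab => by
    rcases eq_or_lt_of_le hab with rfl | hlt
    · exact le_refl _
    · exact le_of_lt (neg_lt_neg (h hlt))
  have hsm : Function.Surjective (fun x => -(F x)) := by
    intro y; obtain ⟨x, hx⟩ := hs (-y); exact ⟨x, by simp [hx]⟩
  have := hm.continuous_of_surjective hsm
  have h2 : Continuous (fun x => -(-(F x))) := this.neg
  simpa using h2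


lemma avoid_left {B : Set ℝ} (hB : ∀ r : ℝ, (B ∩ Set.Icc (-r) r).Finite) (q : ℝ) :
    ∃ ε > 0, ∀ y ∈ Ioo (q - ε) q, y ∉ B := by
  set S := B ∩ Ioo (q-1) q with hSdef
  have hS : S.Finite := by
    apply (hB (|q|+2)).subset
    rintro y ⟨hyB, hy1, hy2⟩
    refine ⟨hyB, ?_, ?_⟩
    · have := abs_nonneg q; have := neg_abs_le q; nlinarith
    · have := le_abs_self q; nlinarith
  rcases S.eq_empty_or_nonempty with hemp | hne
  · refine ⟨1, one_pos, fun y hy hyB => ?_⟩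
    have : y ∈ S := ⟨hyB, hy.1, hy.2⟩
    rw [hemp] at this; exact this
  · have hmem : sSup S ∈ S := hne.csSup_mem hS
    set m := sSup S with hm
    refine ⟨q - m, by linarith [hmem.2.2], fun y hy hyB => ?_⟩
    have hy1 : m < y := by have := hy.1; linarith
    have : y ∈ S := ⟨hyB, by linarith [hmem.2.1], hy.2⟩
    have : y ≤ m := le_csSup hS.bddAbove this
    linarith

lemma avoid_right {B : Set ℝ} (hB : ∀ r : ℝ, (B ∩ Set.Icc (-r) r).Finite) (q : ℝ) :
    ∃ ε > 0, ∀ y ∈ Ioo q (q + ε), y ∉ B := by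
  set S := B ∩ Ioo q (q+1) with hSdef
  have hS : S.Finite := by
    apply (hB (|q|+2)).subset
    rintro y ⟨hyB, hy1, hy2⟩
    refine ⟨hyB, ?_, ?_⟩
    · have := neg_abs_le q; nlinarith [abs_nonneg q]
    · have := le_abs_self q; nlinarith
  rcases S.eq_empty_or_nonempty with hemp | hne
  · refine ⟨1, one_pos, fun y hy hyB => ?_⟩
    have : y ∈ S := ⟨hyB, hy.1, hy.2⟩
    rw [hemp] at this; exact this
  · have hmem : sInf S ∈ S := hne.csInf_mem hS
    set m := sInf S with hm
    refine ⟨m - q, by linarith [hmem.2.1], fun y hy hyB => ?_⟩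
    have hy2 : y < m := by have := hy.2; linarith
    have : y ∈ S := ⟨hyB, hy.1, by linarith [hmem.2.2]⟩
    have : m ≤ y := csInf_le hS.bddBelow this
    linarith

lemma affine_of_locallyAffine {F : ℝ → ℝ} {c d : ℝ} (hcd : c < d)
    (hloc : ∀ x ∈ Ioo c d, ∃ a b : ℝ, ∀ᶠ y in nhds x, F y = a * y + b) :
    ∃ a b : ℝ, ∀ y ∈ Ioo c d, F y = a * y + b := by
  obtain ⟨a, b, hab⟩ := hloc ((c+d)/2) ⟨by linarith, by linarith⟩
  set S : Set ℝ := {y | ∀ᶠ z in nhds y, F z = a * z + b} with hSdef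
  have hSopen : IsOpen S := by
    rw [isOpen_iff_mem_nhds]
    intro y hy
    exact hy.eventually_nhds
  have agree : ∀ y ∈ Ioo c d, y ∈ closure S → y ∈ S := by
    intro y hy hyc
    obtain ⟨a', b', h'⟩ := hloc y hy
    obtain ⟨U, hUsub, hUopen, hyU⟩ := eventually_nhds_iff.mp h'
    obtain ⟨w, hwU, hwS⟩ := mem_closure_iff.mp hyc U hUopen hyU
    obtain ⟨W, hWsub, hWopen, hwW⟩ := eventually_nhds_iff.mp hwS
    obtain ⟨ε, hε, hball⟩ := Metric.isOpen_iff.mp (hUopen.inter hWopen) w ⟨hwU, hwW⟩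
    have h1 : ∀ z ∈ Metric.ball w ε, a * z + b = a' * z + b' := by
      intro z hz
      rw [← hWsub z (hball hz).2, ← hUsub z (hball hz).1]
    have e1 := h1 w (Metric.mem_ball_self hε)
    have e2 : a * (w + ε/2) + b = a' * (w + ε/2) + b' := by
      apply h1
      rw [Metric.mem_ball, Real.dist_eq, show w + ε/2 - w = ε/2 by ring,
        abs_of_pos (half_pos hε)]
      linarith
    have key : a * (ε/2) = a' * (ε/2) := by linear_combination e2 - e1
    have haa : a = a' := mul_right_cancel₀ (by positivity) key
    have hbb : b = b' := by linear_combination e1 - w * haa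
    show ∀ᶠ z in nhds y, F z = a * z + b
    rw [haa, hbb]
    exact h'
  have hsub : Ioo c d ⊆ S := by
    apply IsPreconnected.subset_left_of_subset_union hSopen isClosed_closure.isOpen_compl
      (disjoint_compl_right.mono_left subset_closure) ?_ ?_ isPreconnected_Ioo
    · intro y hy
      by_cases hc : y ∈ closure S
      · exact Or.inl (agree y hy hc)
      · exact Or.inr hc
    · exact ⟨(c+d)/2, ⟨by constructor <;> linarith, hab⟩⟩
  exact ⟨a, b, fun y hy => ((hsub hy).self_of_nhds)⟩

lemma germ_left {F : ℝ → ℝ} (hPL : IsPLFun F) (q : ℝ) :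
    ∃ ε > 0, ∃ a b : ℝ, ∀ y ∈ Ioo (q - ε) q, F y = a * y + b := by
  obtain ⟨B, hBfin, hBloc⟩ := hPL
  obtain ⟨ε, hε, hεB⟩ := avoid_left hBfin q
  obtain ⟨a, b, hab⟩ := affine_of_locallyAffine (show q - ε < q by linarith)
    (fun x hx => hBloc x (hεB x hx))
  exact ⟨ε, hε, a, b, hab⟩

lemma germ_right {F : ℝ → ℝ} (hPL : IsPLFun F) (q : ℝ) :
    ∃ ε > 0, ∃ a b : ℝ, ∀ y ∈ Ioo q (q + ε), F y = a * y + b := by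
  obtain ⟨B, hBfin, hBloc⟩ := hPL
  obtain ⟨ε, hε, hεB⟩ := avoid_right hBfin q
  obtain ⟨a, b, hab⟩ := affine_of_locallyAffine (show q < q + ε by linarith)
    (fun x hx => hBloc x (hεB x hx))
  exact ⟨ε, hε, a, b, hab⟩

lemma eval_right {F : ℝ → ℝ} (hF : Continuous F) {a b c d : ℝ} (hcd : c < d)
    (h : ∀ y ∈ Ioo c d, F y = a * y + b) : F d = a * d + b := by
  have hcl : IsClosed {y : ℝ | F y = a * y + b} := isClosed_eq hF (by continuity)
  have h2 : closure (Ioo c d) ⊆ {y : ℝ | F y = a * y + b} := closure_minimal h hcl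
  exact h2 (by rw [closure_Ioo hcd.ne]; exact ⟨le_of_lt hcd, le_refl d⟩)

lemma int_valued_zero {δ : ℝ → ℝ} (hc : Continuous δ) (hint : ∀ x, ∃ k : ℤ, δ x = k)
    {x₀ : ℝ} (h0 : δ x₀ = 0) : ∀ x, δ x = 0 := by
  intro x
  obtain ⟨k, hk⟩ := hint x
  rcases eq_or_ne k 0 with rfl | hne
  · rw [hk]; simp
  exfalso
  have hiv := intermediate_value_uIcc (a := x₀) (b := x) (f := δ) hc.continuousOn
  rcases lt_or_gt_of_ne hne with hneg | hpos
  · have hk1 : (k : ℝ) ≤ -1 := by exact_mod_cast Int.le_of_lt_add_one (by omega : k < -1 + 1)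
    have hmem : (-1/2 : ℝ) ∈ uIcc (δ x₀) (δ x) := by
      rw [h0, hk, Set.mem_uIcc]; right; constructor <;> linarith
    obtain ⟨c, _, hc2⟩ := hiv hmem
    obtain ⟨m, hm⟩ := hint c
    rw [hm] at hc2
    have : (2 * m : ℝ) = -1 := by push_cast; linarith
    have : (2 * m : ℤ) = -1 := by exact_mod_cast this
    omega
  · have hk1 : (1 : ℝ) ≤ (k : ℝ) := by exact_mod_cast hpos
    have hmem : (1/2 : ℝ) ∈ uIcc (δ x₀) (δ x) := by
      rw [h0, hk, Set.mem_uIcc]; left; constructor <;> linarith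
    obtain ⟨c, _, hc2⟩ := hiv hmem
    obtain ⟨m, hm⟩ := hint c
    rw [hm] at hc2
    have : (2 * m : ℝ) = 1 := by push_cast; linarith
    have : (2 * m : ℤ) = 1 := by exact_mod_cast this
    omega

lemma isLUB_image {Φ : ℝ → ℝ} (hm : StrictMono Φ) (hs : Function.Surjective Φ)
    {S : Set ℝ} {p : ℝ} (h : IsLUB S p) : IsLUB (Φ '' S) (Φ p) := by
  constructor
  · rintro y ⟨x, hx, rfl⟩
    exact hm.monotone (h.1 hx)
  · intro u hu
    obtain ⟨w, rfl⟩ := hs u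
    refine hm.monotone (h.2 ?_)
    intro x hx
    exact (hm.le_iff_le).mp (hu ⟨x, hx, rfl⟩)


lemma core (F T : ℝ → ℝ) (α β : ℝ)
    (hFanti : StrictAnti F) (hFcont : Continuous F) (hFsurj : Function.Surjective F)
    (hFPL : IsPLFun F) (hFper : ∀ x, F (x+1) = F x - 1)
    (hTmono : StrictMono T) (hTsurj : Function.Surjective T)
    (hαβ : α < β) (hFα : F α = α) (hFβ : F β = β - 1)
    (hTα : T α = α) (hTβ : T β = β)
    (hrel : ∀ x, F (F (T (F (F x)))) = T x) :
    ∀ x, F (F x) = x := by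
  set G : ℝ → ℝ := fun x => F (F x) with hGdef
  have hGmono : StrictMono G := fun a b hab => hFanti (hFanti hab)
  have hGcont : Continuous G := hFcont.comp hFcont
  have hGα : G α = α := by show F (F α) = α; rw [hFα, hFα]
  have hFβ1 : F (β - 1) = β := by
    have h2 := hFper (β - 1)
    rw [sub_add_cancel, hFβ] at h2
    linarith
  have hGβ : G β = β := by show F (F β) = β; rw [hFβ, hFβ1]
  have hGper1 : ∀ x, G (x + 1) = G x + 1 := by
    intro x
    show F (F (x+1)) = F (F x) + 1
    rw [hFper x]
    have h2 := hFper (F x - 1)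
    rw [sub_add_cancel] at h2
    linarith
  have hGsurj : Function.Surjective G := by
    intro y
    obtain ⟨u, hu⟩ := hFsurj y
    obtain ⟨v, hv⟩ := hFsurj u
    exact ⟨v, by show F (F v) = y; rw [hv, hu]⟩
  have hkey : ∀ x, G (T (G x)) = T x := fun x => hrel x
  have hGIcc : ∀ x ∈ Icc α β, G x ∈ Icc α β := by
    intro x hx
    constructor
    · calc α = G α := hGα.symm
        _ ≤ G x := hGmono.monotone hx.1
    · calc G x ≤ G β := hGmono.monotone hx.2
        _ = β := hGβ
  have hTIcc : ∀ x ∈ Icc α β, T x ∈ Icc α β := by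
    intro x hx
    constructor
    · calc α = T α := hTα.symm
        _ ≤ T x := hTmono.monotone hx.1
    · calc T x ≤ T β := hTmono.monotone hx.2
        _ = β := hTβ
  set U : Set ℝ := {x | x ∈ Icc α β ∧ x < G x} with hUdef
  set V : Set ℝ := {x | x ∈ Icc α β ∧ G x < x} with hVdef
  set Φ : ℝ → ℝ := fun x => T (G x) with hΦdef
  have hΦmono : StrictMono Φ := fun a b hab => hTmono (hGmono hab)
  have hΦsurj : Function.Surjective Φ := by
    intro y
    obtain ⟨u, hu⟩ := hTsurj y
    obtain ⟨v, hv⟩ := hGsurj u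
    exact ⟨v, by show T (G v) = y; rw [hv, hu]⟩
  have hΦα : Φ α = α := by show T (G α) = α; rw [hGα, hTα]
  have hΦβ : Φ β = β := by show T (G β) = β; rw [hGβ, hTβ]
  have hstepUV : ∀ x ∈ U, Φ x ∈ V := by
    intro x hx
    refine ⟨hTIcc _ (hGIcc _ hx.1), ?_⟩
    have h2 : T x < T (G x) := hTmono hx.2
    rw [← hkey x] at h2
    exact h2
  have hstepVU : ∀ x ∈ V, Φ x ∈ U := by
    intro x hx
    refine ⟨hTIcc _ (hGIcc _ hx.1), ?_⟩
    have h2 : T (G x) < T x := hTmono hx.2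
    rw [← hkey x] at h2
    exact h2
  have hIccmem : ∀ x : ℝ, Φ x ∈ Icc α β → x ∈ Icc α β := by
    intro x hx
    constructor
    · by_contra hlt
      push_neg at hlt
      have h2 : Φ x < Φ α := hΦmono hlt
      rw [hΦα] at h2
      linarith [hx.1]
    · by_contra hlt
      push_neg at hlt
      have h2 : Φ β < Φ x := hΦmono hlt
      rw [hΦβ] at h2
      linarith [hx.2]
  have hinvV : ∀ y ∈ V, ∃ x ∈ U, Φ x = y := by
    intro y hy
    obtain ⟨x, hx⟩ := hΦsurj y
    have hxIcc : x ∈ Icc α β := hIccmem x (by rw [hx]; exact hy.1)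
    rcases lt_trichotomy x (G x) with h | h | h
    · exact ⟨x, ⟨hxIcc, h⟩, hx⟩
    · exfalso
      have h2 := hkey x
      rw [← h] at h2
      have h3 : y = T x := by rw [← hx]; show T (G x) = T x; rw [← h]
      have h4 := hy.2
      rw [h3, h2] at h4
      exact lt_irrefl _ h4
    · exfalso
      have h5 : Φ x ∈ U := hstepVU x ⟨hxIcc, h⟩
      rw [hx] at h5
      exact lt_irrefl y (lt_trans h5.2 hy.2)
  have hinvU : ∀ y ∈ U, ∃ x ∈ V, Φ x = y := by
    intro y hy
    obtain ⟨x, hx⟩ := hΦsurj y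
    have hxIcc : x ∈ Icc α β := hIccmem x (by rw [hx]; exact hy.1)
    rcases lt_trichotomy x (G x) with h | h | h
    · exfalso
      have h5 : Φ x ∈ V := hstepUV x ⟨hxIcc, h⟩
      rw [hx] at h5
      exact lt_irrefl y (lt_trans hy.2 h5.2)
    · exfalso
      have h2 := hkey x
      rw [← h] at h2
      have h3 : y = T x := by rw [← hx]; show T (G x) = T x; rw [← h]
      have h4 := hy.2
      rw [h3, h2] at h4
      exact lt_irrefl _ h4
    · exact ⟨x, ⟨hxIcc, h⟩, hx⟩
  have hUVempty : ∀ x ∈ Icc α β, G x = x := by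
    by_contra hcon
    push_neg at hcon
    obtain ⟨x₀, hx₀I, hx₀⟩ := hcon
    have hUne : U.Nonempty ∧ V.Nonempty := by
      rcases lt_trichotomy x₀ (G x₀) with h | h | h
      · exact ⟨⟨x₀, hx₀I, h⟩, ⟨Φ x₀, hstepUV x₀ ⟨hx₀I, h⟩⟩⟩
      · exact absurd h.symm hx₀
      · exact ⟨⟨Φ x₀, hstepVU x₀ ⟨hx₀I, h⟩⟩, ⟨x₀, hx₀I, h⟩⟩
    obtain ⟨hU, hV⟩ := hUne
    have hUb : BddAbove U := ⟨β, fun x hx => hx.1.2⟩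
    have hVb : BddAbove V := ⟨β, fun x hx => hx.1.2⟩
    set p := sSup U with hp
    set q := sSup V with hq
    have hpU : IsLUB U p := isLUB_csSup hU hUb
    have hqV : IsLUB V q := isLUB_csSup hV hVb
    have himgUV : Φ '' U = V := by
      apply Set.eq_of_subset_of_subset
      · rintro y ⟨x, hx, rfl⟩
        exact hstepUV x hx
      · intro y hy
        obtain ⟨x, hxU, hx⟩ := hinvV y hy
        exact ⟨x, hxU, hx⟩
    have himgVU : Φ '' V = U := by
      apply Set.eq_of_subset_of_subset
      · rintro y ⟨x, hx, rfl⟩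
        exact hstepVU x hx
      · intro y hy
        obtain ⟨x, hxV, hx⟩ := hinvU y hy
        exact ⟨x, hxV, hx⟩
    have hΦp : Φ p = q := by
      have h2 := isLUB_image hΦmono hΦsurj hpU
      rw [himgUV] at h2
      exact h2.unique hqV
    have hΦq : Φ q = p := by
      have h2 := isLUB_image hΦmono hΦsurj hqV
      rw [himgVU] at h2
      exact h2.unique hpU
    have hpq : p = q := by
      rcases lt_trichotomy p q with h | h | h
      · exfalso
        have h2 := hΦmono h
        rw [hΦp, hΦq] at h2
        linarith
      · exact h
      · exfalso
        have h2 := hΦmono h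
        rw [hΦp, hΦq] at h2
        linarith
    have hGp : G p = p := by
      have h1 : p ∈ closure U := csSup_mem_closure hU hUb
      have h2 : closure U ⊆ {x : ℝ | x ≤ G x} :=
        closure_minimal (fun x hx => le_of_lt hx.2) (isClosed_le continuous_id hGcont)
      have h3 : q ∈ closure V := csSup_mem_closure hV hVb
      have h4 : closure V ⊆ {x : ℝ | G x ≤ x} :=
        closure_minimal (fun x hx => le_of_lt hx.2) (isClosed_le hGcont continuous_id)
      exact le_antisymm (by rw [hpq]; exact h4 h3) (h2 h1)
    have hpnotU : p ∉ U := by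
      intro h
      have h2 := h.2
      rw [hGp] at h2
      exact lt_irrefl _ h2
    have hpnotV : p ∉ V := by
      intro h
      have h2 := h.2
      rw [hGp] at h2
      exact lt_irrefl _ h2
    have happU : ∀ ε > 0, ∃ x ∈ U, p - ε < x ∧ x < p := by
      intro ε hε
      obtain ⟨x, hxU, hx⟩ := exists_lt_of_lt_csSup hU (show p - ε < sSup U by rw [← hp]; linarith)
      refine ⟨x, hxU, hx, lt_of_le_of_ne (hpU.1 hxU) ?_⟩
      rintro rfl
      exact hpnotU hxU
    have happV : ∀ ε > 0, ∃ x ∈ V, p - ε < x ∧ x < p := by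
      intro ε hε
      obtain ⟨x, hxV, hx⟩ := exists_lt_of_lt_csSup hV
        (show p - ε < sSup V by rw [← hq, ← hpq]; linarith)
      have hxle : x ≤ p := by rw [hpq]; exact hqV.1 hxV
      refine ⟨x, hxV, hx, lt_of_le_of_ne hxle ?_⟩
      rintro rfl
      exact hpnotV hxV
    have hαp : α < p := by
      obtain ⟨x, hxU⟩ := hU
      have h1 : α ≤ x := hxU.1.1
      have h2 : x ≤ p := hpU.1 hxU
      rcases eq_or_lt_of_le h1 with heq | h
      · exfalso
        have h3 := hxU.2
        rw [← heq, hGα] at h3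
        exact lt_irrefl _ h3
      · linarith
    obtain ⟨ε₁, hε₁, a1, b1, hA1⟩ := germ_left hFPL p
    have hFp : F p = a1 * p + b1 := eval_right hFcont (by linarith) hA1
    have ha1neg : a1 < 0 := by
      have k1 : F (p - ε₁ * (2/3)) = a1 * (p - ε₁*(2/3)) + b1 := hA1 _ ⟨by linarith, by linarith⟩
      have k2 : F (p - ε₁ * (1/3)) = a1 * (p - ε₁*(1/3)) + b1 := hA1 _ ⟨by linarith, by linarith⟩
      have k3 : F (p - ε₁ * (1/3)) < F (p - ε₁ * (2/3)) := hFanti (by linarith)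
      nlinarith
    obtain ⟨ε₂, hε₂, a2, b2, hA2⟩ := germ_right hFPL (F p)
    set ε : ℝ := min ε₁ (ε₂ / (-a1)) with hεdef
    have hεpos : 0 < ε := lt_min hε₁ (div_pos hε₂ (by linarith))
    have hεle1 : ε ≤ ε₁ := min_le_left _ _
    have hεle2 : ε ≤ ε₂ / (-a1) := min_le_right _ _
    have hGaff : ∀ y ∈ Ioo (p - ε) p, G y = (a2*a1) * y + (a2*b1 + b2) := by
      intro y hy
      have hy1 : y ∈ Ioo (p - ε₁) p := ⟨by have := hy.1; linarith, hy.2⟩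
      have hFy : F y = a1 * y + b1 := hA1 y hy1
      have hFyIoo : F y ∈ Ioo (F p) (F p + ε₂) := by
        constructor
        · exact hFanti hy.2
        · have h5 : p - y < ε := by have := hy.1; linarith
          have h7 : F y - F p = (-a1) * (p - y) := by rw [hFy, hFp]; ring
          have h8 : (-a1) * (p - y) < (-a1) * (ε₂ / (-a1)) :=
            mul_lt_mul_of_pos_left (by linarith) (by linarith)
          have h9 : (-a1) * (ε₂ / (-a1)) = ε₂ := by
            rw [mul_comm]
            exact div_mul_cancel₀ ε₂ (by linarith)
          linarith
      have h10 := hA2 (F y) hFyIoo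
      calc G y = F (F y) := rfl
        _ = a2 * (F y) + b2 := h10
        _ = a2 * (a1 * y + b1) + b2 := by rw [hFy]
        _ = (a2*a1) * y + (a2*b1 + b2) := by ring
    have hGpe : (a2*a1) * p + (a2*b1 + b2) = p := by
      have h2 := eval_right hGcont (show p - ε < p by linarith) hGaff
      rw [hGp] at h2
      exact h2.symm
    obtain ⟨x₁, hx₁U, hx₁l, hx₁r⟩ := happU ε hεpos
    obtain ⟨x₂, hx₂V, hx₂l, hx₂r⟩ := happV ε hεpos
    have e1 : x₁ < (a2*a1) * x₁ + (a2*b1 + b2) := by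
      rw [← hGaff x₁ ⟨hx₁l, hx₁r⟩]
      exact hx₁U.2
    have e2 : (a2*a1) * x₂ + (a2*b1 + b2) < x₂ := by
      rw [← hGaff x₂ ⟨hx₂l, hx₂r⟩]
      exact hx₂V.2
    have f1 : ((a2*a1) - 1) * (x₁ - p) > 0 := by nlinarith
    have f2 : ((a2*a1) - 1) * (x₂ - p) < 0 := by nlinarith
    rcases mul_pos_iff.mp f1 with ⟨h1, h2⟩ | ⟨h1, h2⟩
    · linarith
    · rcases mul_neg_iff.mp f2 with ⟨h3, h4⟩ | ⟨h3, h4⟩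
      · linarith
      · linarith
  have hJ : ∀ y ∈ Icc (β - 1) α, G y = y := by
    intro y hy
    have hsub : Icc (F β) (F α) ⊆ F '' Icc α β :=
      intermediate_value_Icc' (le_of_lt hαβ) hFcont.continuousOn
    rw [hFα, hFβ] at hsub
    obtain ⟨x, hxI, hx⟩ := hsub hy
    have h2 : F (F x) = x := hUVempty x hxI
    show F (F y) = y
    rw [← hx, h2]
  have hGtr := int_translate (F := G) (k := 1) (fun x => by rw [hGper1 x])
  intro x
  set n : ℤ := ⌊β - x⌋ with hn
  have hn1 : (n:ℝ) ≤ β - x := Int.floor_le _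
  have hn2 : β - x < n + 1 := Int.lt_floor_add_one _
  have hmem : x + (n:ℝ) ∈ Icc (β-1) β := ⟨by linarith, by linarith⟩
  have hval : G (x + (n:ℝ)) = x + (n:ℝ) := by
    rcases le_total (x + (n:ℝ)) α with h | h
    · exact hJ _ ⟨hmem.1, h⟩
    · exact hUVempty _ ⟨h, hmem.2⟩
  have h9 := hGtr n x
  rw [hval] at h9
  push_cast at h9
  show F (F x) = x
  have h10 : G x = x := by linarith
  exact h10

end RevAux


/-- Let `f ∈ PL⁻(S¹)` (such a map has exactly two fixed points).  Then `f` is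
reversed by some `h ∈ PL(S¹)` fixing each fixed point of `f` if and only if
`f² = id`.  (Reversibility `h f h⁻¹ = f⁻¹` is expressed as `f ∘ h ∘ f = h`.) -/
theorem reversed_fixing_fixed_points_iff_involution (f : Circle ≃ₜ Circle)
    (hf : PLminus f) :
    (∃ h : Circle ≃ₜ Circle, PLcirc h ∧ (∀ z : Circle, f z = z → h z = z) ∧
        ∀ z : Circle, f (h (f z)) = h z) ↔
      ∀ z : Circle, f (f z) = z := by
  constructor
  · rintro ⟨h, hhPL, hfix, hrel⟩
    obtain ⟨F, hFanti, hFPL, hFlift⟩ := hf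
    have hFsurj : Function.Surjective F := RevAux.lift_surjective f F (-1) (Or.inr rfl) hFlift
    have hFcont : Continuous F := RevAux.cont_of_anti_surj_s17 hFanti hFsurj
    have hFper : ∀ x, F (x+1) = F x - 1 := fun x => by have := hFlift.2 x; linarith
    have hFtr := RevAux.int_translate (k := (-1:ℝ)) hFlift.2
    set φ : ℝ → ℝ := fun x => x - F x with hφdef
    have hφcont : Continuous φ := continuous_id.sub hFcont
    have hφmono : StrictMono φ := by
      intro a b hab
      have h2 := hFanti hab
      show a - F a < b - F b
      linarith
    have hφtr : ∀ (n : ℤ) (x : ℝ), φ (x + n) = φ x + 2*n := by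
      intro n x
      show (x + n) - F (x + n) = (x - F x) + 2*n
      rw [hFtr n x]
      push_cast
      ring
    have hroot : ∀ c : ℝ, ∃ x, φ x = c := by
      intro c
      obtain ⟨N, hN⟩ := exists_nat_gt |c - φ 0|
      have habs1 : c - φ 0 ≤ |c - φ 0| := le_abs_self _
      have habs2 : -(c - φ 0) ≤ |c - φ 0| := neg_le_abs _
      have hp1 := hφtr (N : ℤ) 0
      have hp2 := hφtr (-(N : ℤ)) 0
      push_cast at hp1 hp2
      rw [zero_add] at hp1 hp2
      have hNc : (0:ℝ) ≤ N := Nat.cast_nonneg N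
      have hle : (-(N:ℝ)) ≤ (N:ℝ) := by linarith
      have hmem : c ∈ Set.Icc (φ (-(N:ℝ))) (φ ((N:ℝ))) := by
        constructor
        · rw [hp2]; linarith
        · rw [hp1]; linarith
      obtain ⟨x, _, hx⟩ := intermediate_value_Icc hle hφcont.continuousOn hmem
      exact ⟨x, hx⟩
    obtain ⟨α, hα⟩ := hroot 0
    obtain ⟨β, hβ⟩ := hroot 1
    have hFα : F α = α := by
      have h2 : α - F α = 0 := hα
      linarith
    have hFβ : F β = β - 1 := by
      have h2 : β - F β = 1 := hβ
      linarith
    have hαβ : α < β := by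
      by_contra hle
      push_neg at hle
      have h2 := hφmono.monotone hle
      rw [hα, hβ] at h2
      linarith
    have hβα1 : β < α + 1 := by
      have h2 : φ (α + 1) = 2 := by
        have h3 := hφtr 1 α
        push_cast at h3
        rw [hα] at h3
        linarith
      by_contra hle
      push_neg at hle
      have h4 := hφmono.monotone hle
      rw [h2, hβ] at h4
      linarith
    have hfa : f (Circle.exp (2*π*α)) = Circle.exp (2*π*α) := by rw [hFlift.1, hFα]
    have hfb : f (Circle.exp (2*π*β)) = Circle.exp (2*π*β) := by
      rw [hFlift.1]
      exact RevAux.exp2pi_eq.mpr ⟨-1, by rw [hFβ]; push_cast; ring⟩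
    have hha := hfix _ hfa
    have hhb := hfix _ hfb
    suffices hGid : ∀ x : ℝ, F (F x) = x by
      intro z
      have hz : Circle.exp (2*π*(Complex.arg (z:ℂ)/(2*π))) = z := by
        rw [show 2*π*(Complex.arg (z:ℂ)/(2*π)) = Complex.arg (z:ℂ) by field_simp]
        exact Circle.exp_arg z
      set x := Complex.arg (z:ℂ)/(2*π) with hxdef
      calc f (f z) = f (f (Circle.exp (2*π*x))) := by rw [hz]
        _ = f (Circle.exp (2*π * F x)) := by rw [hFlift.1]
        _ = Circle.exp (2*π * F (F x)) := hFlift.1 _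
        _ = Circle.exp (2*π*x) := by rw [hGid x]
        _ = z := hz
    rcases hhPL with ⟨H0, hH0mono, _, hH0lift⟩ | ⟨H0, hH0anti, _, hH0lift⟩
    · -- orientation preserving h
      have hH0surj : Function.Surjective H0 := RevAux.lift_surjective h H0 1 (Or.inl rfl) hH0lift
      obtain ⟨n, hn⟩ : ∃ n : ℤ, H0 α = α + n := by
        apply RevAux.exp2pi_eq.mp
        rw [← hH0lift.1 α, hha]
      set H : ℝ → ℝ := fun x => H0 x - n with hHdef
      have hHmono : StrictMono H := by
        intro a b hab
        have := hH0mono hab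
        show H0 a - n < H0 b - n
        linarith
      have hHsurj : Function.Surjective H := by
        intro y
        obtain ⟨t, ht⟩ := hH0surj (y + n)
        exact ⟨t, by show H0 t - n = y; rw [ht]; ring⟩
      have hHcont : Continuous H := RevAux.cont_of_mono_surj_s17 hHmono.monotone hHsurj
      have hHper : ∀ x, H (x+1) = H x + 1 := by
        intro x
        show H0 (x+1) - n = (H0 x - n) + 1
        rw [hH0lift.2 x]
        ring
      have hHα : H α = α := by show H0 α - n = α; rw [hn]; ring
      have hHpt : ∀ x, h (Circle.exp (2*π*x)) = Circle.exp (2*π*(H x)) := by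
        intro x
        rw [hH0lift.1 x]
        exact RevAux.exp2pi_eq.mpr ⟨n, by show H0 x = (H0 x - n) + n; ring⟩
      have hR : ∀ x, F (H (F x)) = H x := by
        have hδc : Continuous (fun x => F (H (F x)) - H x) :=
          (hFcont.comp (hHcont.comp hFcont)).sub hHcont
        have hδint : ∀ x, ∃ k : ℤ, F (H (F x)) - H x = k := by
          intro x
          have h1 := hrel (Circle.exp (2*π*x))
          rw [hFlift.1 x, hHpt (F x), hFlift.1 (H (F x)), hHpt x] at h1
          obtain ⟨k, hk⟩ := RevAux.exp2pi_eq.mp h1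
          exact ⟨k, by linarith⟩
        have hδ0 : F (H (F α)) - H α = 0 := by rw [hFα, hHα, hFα]; ring
        have h2 := RevAux.int_valued_zero hδc hδint hδ0
        intro x
        have h3 := h2 x
        linarith
      obtain ⟨m, hm⟩ : ∃ m : ℤ, H β = β + m := by
        obtain ⟨m0, hm0⟩ : ∃ m0 : ℤ, H0 β = β + m0 := by
          apply RevAux.exp2pi_eq.mp
          rw [← hH0lift.1 β, hhb]
        exact ⟨m0 - n, by show H0 β - n = β + ((m0 - n : ℤ) : ℝ); rw [hm0]; push_cast; ring⟩
      have hb1 : H β < α + 1 := by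
        have h2 : H β < H (α+1) := hHmono hβα1
        rw [hHper α, hHα] at h2
        linarith
      have hb2 : α < H β := by
        have h2 := hHmono hαβ
        rw [hHα] at h2
        exact h2
      have hm0 : m = 0 := by
        have c1 : (m:ℝ) < 1 := by rw [hm] at hb1; linarith
        have c2 : (-1:ℝ) < m := by rw [hm] at hb2; linarith
        have d1 : m < 1 := by exact_mod_cast c1
        have d2 : -1 < m := by exact_mod_cast c2
        omega
      have hHβ : H β = β := by rw [hm, hm0]; push_cast; ring
      have hrelT : ∀ x, F (F (H (F (F x)))) = H x := by
        intro x
        rw [hR (F x)]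
        exact hR x
      exact RevAux.core F H α β hFanti hFcont hFsurj hFPL hFper hHmono hHsurj hαβ hFα hFβ
        hHα hHβ hrelT
    · -- orientation reversing h
      have hH0surj : Function.Surjective H0 :=
        RevAux.lift_surjective h H0 (-1) (Or.inr rfl) hH0lift
      obtain ⟨n, hn⟩ : ∃ n : ℤ, H0 α = α + n := by
        apply RevAux.exp2pi_eq.mp
        rw [← hH0lift.1 α, hha]
      set H : ℝ → ℝ := fun x => H0 x - n with hHdef
      have hHanti : StrictAnti H := by
        intro a b hab
        have := hH0anti hab
        show H0 b - n < H0 a - n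
        linarith
      have hHsurj : Function.Surjective H := by
        intro y
        obtain ⟨t, ht⟩ := hH0surj (y + n)
        exact ⟨t, by show H0 t - n = y; rw [ht]; ring⟩
      have hHcont : Continuous H := RevAux.cont_of_anti_surj_s17 hHanti hHsurj
      have hHper : ∀ x, H (x+1) = H x - 1 := by
        intro x
        show H0 (x+1) - n = (H0 x - n) - 1
        have := hH0lift.2 x
        linarith
      have hHα : H α = α := by show H0 α - n = α; rw [hn]; ring
      have hHpt : ∀ x, h (Circle.exp (2*π*x)) = Circle.exp (2*π*(H x)) := by
        intro x
        rw [hH0lift.1 x]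
        exact RevAux.exp2pi_eq.mpr ⟨n, by show H0 x = (H0 x - n) + n; ring⟩
      have hR : ∀ x, F (H (F x)) = H x := by
        have hδc : Continuous (fun x => F (H (F x)) - H x) :=
          (hFcont.comp (hHcont.comp hFcont)).sub hHcont
        have hδint : ∀ x, ∃ k : ℤ, F (H (F x)) - H x = k := by
          intro x
          have h1 := hrel (Circle.exp (2*π*x))
          rw [hFlift.1 x, hHpt (F x), hFlift.1 (H (F x)), hHpt x] at h1
          obtain ⟨k, hk⟩ := RevAux.exp2pi_eq.mp h1
          exact ⟨k, by linarith⟩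
        have hδ0 : F (H (F α)) - H α = 0 := by rw [hFα, hHα, hFα]; ring
        have h2 := RevAux.int_valued_zero hδc hδint hδ0
        intro x
        have h3 := h2 x
        linarith
      obtain ⟨m, hm⟩ : ∃ m : ℤ, H β = β + m := by
        obtain ⟨m0, hm0⟩ : ∃ m0 : ℤ, H0 β = β + m0 := by
          apply RevAux.exp2pi_eq.mp
          rw [← hH0lift.1 β, hhb]
        exact ⟨m0 - n, by show H0 β - n = β + ((m0 - n : ℤ) : ℝ); rw [hm0]; push_cast; ring⟩
      have hb1 : H β < α := by
        have h2 := hHanti hαβ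
        rw [hHα] at h2
        exact h2
      have hb2 : α - 1 < H β := by
        have h2 : H (α+1) < H β := hHanti hβα1
        rw [hHper α, hHα] at h2
        linarith
      have hm0 : m = -1 := by
        have c1 : (m:ℝ) < 0 := by rw [hm] at hb1; linarith
        have c2 : (-2:ℝ) < m := by rw [hm] at hb2; linarith
        have d1 : m < 0 := by exact_mod_cast c1
        have d2 : -2 < m := by exact_mod_cast c2
        omega
      have hHβ : H β = β - 1 := by rw [hm, hm0]; push_cast; ring
      set T : ℝ → ℝ := fun x => H (F x) with hTdef
      have hTmono : StrictMono T := fun a b hab => hHanti (hFanti hab)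
      have hTsurj : Function.Surjective T := by
        intro y
        obtain ⟨u, hu⟩ := hHsurj y
        obtain ⟨v, hv⟩ := hFsurj u
        exact ⟨v, by show H (F v) = y; rw [hv, hu]⟩
      have hTα : T α = α := by show H (F α) = α; rw [hFα, hHα]
      have hTβ : T β = β := by
        show H (F β) = β
        rw [hFβ]
        have h2 := hHper (β - 1)
        rw [sub_add_cancel] at h2
        linarith
      have hrelT : ∀ x, F (F (T (F (F x)))) = T x := by
        intro x
        show F (F (H (F (F (F x))))) = H (F x)
        rw [hR (F (F x))]
        exact hR (F x)
      exact RevAux.core F T α β hFanti hFcont hFsurj hFPL hFper hTmono hTsurj hαβ hFα hFβ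
        hTα hTβ hrelT
  · intro hinv
    exact ⟨f, Or.inr hf, fun z hz => hz, fun z => hinv (f z)⟩
end
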